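/- arXiv:1512.00670 — 3 statements merged into one kernel-verified Lean document; each statement's English description precedes it below -/
import Mathlib

section
/- The function L is slowly varying at infinity: for every fixed v > 0, L(tv)/L(t) → 1 as t → ∞. Consequently the function R(t) = C₂ ∑_{k=1}^∞ k^{-(1+2(1-H))} e^{-λt/k} can be written as R(t) = L(t)/t^{2(1-H)} for t > 0 with L slowly varying. -/
open Filter

/-- `S(t) = ∑_{k=1}^∞ k^{-(1+2(1-H))} e^{-λt/k}`. -/
noncomputable def OUsum (H lam t : ℝ) : ℝ :=
  ∑' k : ℕ, ((k : ℝ) + 1) ^ (-(1 + 2 * (1 - H))) * Real.exp (-(lam * t) / ((k : ℝ) + 1))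

/-- `L(t) = C₂ (λt)^{2(1-H)} S(t)` for `t ≠ 0`, and `L(0) = 0`. -/
noncomputable def OUslow (H lam C2 t : ℝ) : ℝ :=
  if t = 0 then 0 else C2 * (lam * t) ^ (2 * (1 - H)) * OUsum H lam t

namespace OUaux
open MeasureTheory Set

noncomputable def psi (α x : ℝ) : ℝ := Real.exp (-x) * x ^ (α - 1)
noncomputable def aa (T : ℝ) (n : ℕ) : ℝ := T / ((n:ℝ)+1)
noncomputable def gg (α T : ℝ) (n : ℕ) : ℝ :=
  T ^ α * (((n:ℝ)+1) ^ (-(1+α)) * Real.exp (-T/((n:ℝ)+1)))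
noncomputable def BB (α T : ℝ) (n : ℕ) : ℝ := T ^ (α-1) * ((n:ℝ)+1) ^ (-(1+α))

lemma psi_integrable {α : ℝ} (hα0 : 0 < α) : IntegrableOn (psi α) (Ioi 0) := by
  have := Real.GammaIntegral_convergent hα0
  exact this

lemma psi_nonneg (α : ℝ) {x : ℝ} (hx : 0 ≤ x) : 0 ≤ psi α x :=
  mul_nonneg (Real.exp_pos _).le (Real.rpow_nonneg hx _)

lemma psi_anti {α : ℝ} (hα1 : α < 1) {x y : ℝ} (hx : 0 < x) (hxy : x ≤ y) :
    psi α y ≤ psi α x := by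
  unfold psi
  exact mul_le_mul (Real.exp_le_exp.2 (by linarith))
    (Real.rpow_le_rpow_of_nonpos hx hxy (by linarith))
    (Real.rpow_nonneg (by linarith) _) (Real.exp_pos _).le

lemma exp_neg_le_inv {x : ℝ} (hx : 0 < x) : Real.exp (-x) ≤ x⁻¹ := by
  rw [Real.exp_neg]
  exact inv_anti₀ hx (by nlinarith [Real.add_one_le_exp x])

lemma psi_int_Ioc {α : ℝ} (hα0 : 0 < α) {b c : ℝ} (hb : 0 < b) :
    IntegrableOn (psi α) (Ioc b c) :=
  (psi_integrable hα0).mono_set (fun x hx => lt_trans hb hx.1)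

lemma int_lb {α : ℝ} (hα0 : 0 < α) (hα1 : α < 1) {b c : ℝ} (hb : 0 < b) (hbc : b ≤ c) :
    psi α c * (c - b) ≤ ∫ x in Ioc b c, psi α x := by
  have hconst : ∫ _x in Ioc b c, psi α c = psi α c * (c - b) := by
    rw [setIntegral_const, measureReal_def, Real.volume_Ioc, ENNReal.toReal_ofReal (by linarith), smul_eq_mul,
      mul_comm]
  rw [← hconst]
  apply setIntegral_mono_on
  · exact integrableOn_const (by rw [Real.volume_Ioc]; exact ENNReal.ofReal_ne_top)
  · exact psi_int_Ioc hα0 hb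
  · exact measurableSet_Ioc
  · exact fun x hx => psi_anti hα1 (lt_trans hb hx.1) hx.2

lemma int_ub {α : ℝ} (hα0 : 0 < α) (hα1 : α < 1) {b c : ℝ} (hb : 0 < b) (hbc : b ≤ c) :
    (∫ x in Ioc b c, psi α x) ≤ psi α b * (c - b) := by
  have hconst : ∫ _x in Ioc b c, psi α b = psi α b * (c - b) := by
    rw [setIntegral_const, measureReal_def, Real.volume_Ioc, ENNReal.toReal_ofReal (by linarith), smul_eq_mul,
      mul_comm]
  rw [← hconst]
  apply setIntegral_mono_on
  · exact psi_int_Ioc hα0 hb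
  · exact integrableOn_const (by rw [Real.volume_Ioc]; exact ENNReal.ofReal_ne_top)
  · exact measurableSet_Ioc
  · exact fun x hx => psi_anti hα1 hb hx.1.le

lemma aa_pos {T : ℝ} (hT : 0 < T) (n : ℕ) : 0 < aa T n := div_pos hT (by positivity)

lemma aa_anti {T : ℝ} (hT : 0 < T) : ∀ {m n : ℕ}, m ≤ n → aa T n ≤ aa T m := by
  intro m n h
  unfold aa
  apply div_le_div_of_nonneg_left hT.le (by positivity)
  exact by exact_mod_cast add_le_add_left (Nat.cast_le.2 h) 1

lemma aa_zero {T : ℝ} : aa T 0 = T := by simp [aa]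

lemma telescope {α : ℝ} (hα0 : 0 < α) {T : ℝ} (hT : 0 < T) (N : ℕ) :
    ∑ n ∈ Finset.range N, ∫ x in Ioc (aa T (n+1)) (aa T n), psi α x
      = ∫ x in Ioc (aa T N) (aa T 0), psi α x := by
  induction N with
  | zero => simp
  | succ N ih =>
    rw [Finset.sum_range_succ, ih]
    rw [← setIntegral_union]
    · rw [Set.union_comm,
        Ioc_union_Ioc_eq_Ioc (aa_anti hT (Nat.le_succ N)) (aa_anti hT (Nat.zero_le N))]
    · rw [Set.Ioc_disjoint_Ioc]
      exact (min_le_right _ _).trans (le_max_left _ _)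
    · exact measurableSet_Ioc
    · exact psi_int_Ioc hα0 (aa_pos hT _)
    · exact psi_int_Ioc hα0 (aa_pos hT _)

lemma gg_nonneg {α T : ℝ} (hT : 0 ≤ T) (n : ℕ) : 0 ≤ gg α T n := by
  unfold gg; positivity

lemma BB_nonneg {α T : ℝ} (hT : 0 ≤ T) (n : ℕ) : 0 ≤ BB α T n := by
  unfold BB; positivity

lemma gg_le_base {α T : ℝ} (hT : 0 ≤ T) (n : ℕ) :
    gg α T n ≤ T ^ α * ((n:ℝ)+1) ^ (-(1+α)) := by
  unfold gg
  rw [← mul_assoc]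
  nlinarith [Real.exp_le_one_iff.2
      (by rw [neg_div]; exact neg_nonpos.2 (by positivity) : -T/((n:ℝ)+1) ≤ 0),
    Real.exp_pos (-T/((n:ℝ)+1)),
    mul_nonneg (Real.rpow_nonneg hT α)
      (Real.rpow_nonneg (by positivity : (0:ℝ) ≤ (n:ℝ)+1) (-(1+α)))]

lemma gg_le_mul_BB {α T : ℝ} (hT : 0 < T) (n : ℕ) :
    gg α T n ≤ ((n:ℝ)+1) * BB α T n := by
  unfold gg BB
  have hc : (0:ℝ) < (n:ℝ)+1 := by positivity
  have he : Real.exp (-T/((n:ℝ)+1)) ≤ ((n:ℝ)+1)/T := by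
    have := exp_neg_le_inv (div_pos hT hc)
    rw [neg_div]
    simpa [inv_div] using this
  have hTa : T ^ (α-1) = T ^ α / T := by
    rw [Real.rpow_sub hT, Real.rpow_one]
  rw [hTa]
  have hb : (0:ℝ) ≤ ((n:ℝ)+1) ^ (-(1+α)) := Real.rpow_nonneg hc.le _
  have hA : (0:ℝ) < T ^ α := Real.rpow_pos_of_pos hT α
  calc T ^ α * (((n:ℝ)+1) ^ (-(1+α)) * Real.exp (-T/((n:ℝ)+1)))
      ≤ T ^ α * (((n:ℝ)+1) ^ (-(1+α)) * (((n:ℝ)+1)/T)) := by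
        apply mul_le_mul_of_nonneg_left _ hA.le
        exact mul_le_mul_of_nonneg_left he hb
    _ = ((n:ℝ)+1) * (T ^ α / T * ((n:ℝ)+1) ^ (-(1+α))) := by
        field_simp

lemma E1 {α T : ℝ} (hT : 0 < T) (n : ℕ) :
    psi α (aa T n) * (aa T n - aa T (n+1)) = gg α T n * (((n:ℝ)+1)/((n:ℝ)+1+1)) := by
  have hc : (0:ℝ) < (n:ℝ)+1 := by positivity
  unfold psi aa gg
  push_cast
  set c := (n:ℝ)+1 with hcdef
  have h1 : (T/c) ^ (α-1) = (T^α/T)/(c^α/c) := by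
    rw [Real.div_rpow hT.le hc.le, Real.rpow_sub hT, Real.rpow_sub hc, Real.rpow_one,
      Real.rpow_one]
  have h2 : c ^ (-(1+α)) = (c * c^α)⁻¹ := by
    rw [Real.rpow_neg hc.le, Real.rpow_add hc, Real.rpow_one]
  have h3 : -T/c = -(T/c) := by rw [neg_div]
  rw [h1, h2, h3]
  have hcα : c^α ≠ 0 := ne_of_gt (Real.rpow_pos_of_pos hc α)
  have hc1 : c + 1 ≠ 0 := by positivity
  field_simp
  ring

lemma E2 {α T : ℝ} (hT : 0 < T) (n : ℕ) :
    psi α (aa T (n+1)) * (aa T n - aa T (n+1)) = gg α T (n+1) * (((n:ℝ)+1+1)/((n:ℝ)+1)) := by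
  have hc : (0:ℝ) < (n:ℝ)+1 := by positivity
  have hd : (0:ℝ) < (n:ℝ)+1+1 := by positivity
  unfold psi aa gg
  push_cast
  set c := (n:ℝ)+1 with hcdef
  set d := (n:ℝ)+1+1 with hddef
  have h1 : (T/d) ^ (α-1) = (T^α/T)/(d^α/d) := by
    rw [Real.div_rpow hT.le hd.le, Real.rpow_sub hT, Real.rpow_sub hd, Real.rpow_one,
      Real.rpow_one]
  have h2 : d ^ (-(1+α)) = (d * d^α)⁻¹ := by
    rw [Real.rpow_neg hd.le, Real.rpow_add hd, Real.rpow_one]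
  have h3 : -T/d = -(T/d) := by rw [neg_div]
  rw [h1, h2, h3]
  have hdα : d^α ≠ 0 := ne_of_gt (Real.rpow_pos_of_pos hd α)
  field_simp
  ring

lemma base_summable {α : ℝ} (hα0 : 0 < α) :
    Summable (fun n : ℕ => ((n:ℝ)+1) ^ (-(1+α))) := by
  have h1 : Summable (fun n : ℕ => (((n:ℕ):ℝ) ^ (1+α))⁻¹) :=
    Real.summable_nat_rpow_inv.2 (by linarith)
  have h2 := (summable_nat_add_iff (f := fun n : ℕ => (((n:ℕ):ℝ) ^ (1+α))⁻¹) 1).2 h1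
  apply h2.congr
  intro n
  rw [Real.rpow_neg (by positivity)]
  push_cast
  ring_nf

lemma gg_summable {α T : ℝ} (hα0 : 0 < α) (hT : 0 < T) : Summable (gg α T) :=
  Summable.of_nonneg_of_le (gg_nonneg hT.le) (gg_le_base hT.le)
    ((base_summable hα0).mul_left _)

lemma BB_summable {α T : ℝ} (hα0 : 0 < α) (hT : 0 < T) : Summable (BB α T) :=
  (base_summable hα0).mul_left _

lemma psilen_nonneg {α T : ℝ} (hα1 : α < 1) (hT : 0 < T) (n : ℕ) :
    0 ≤ psi α (aa T n) * (aa T n - aa T (n+1)) :=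
  mul_nonneg (psi_nonneg α (aa_pos hT n).le)
    (by linarith [aa_anti hT (Nat.le_succ n)])

lemma psilen_le_gg {α T : ℝ} (hT : 0 < T) (n : ℕ) :
    psi α (aa T n) * (aa T n - aa T (n+1)) ≤ gg α T n := by
  rw [E1 hT n]
  have hc : (0:ℝ) < (n:ℝ)+1 := by positivity
  have := gg_nonneg (α := α) hT.le n
  nlinarith [div_le_one_of_le₀ (by linarith : ((n:ℝ)+1) ≤ (n:ℝ)+1+1) (by linarith),
    div_nonneg hc.le (by linarith : (0:ℝ) ≤ (n:ℝ)+1+1)]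

lemma psilen_summable {α T : ℝ} (hα0 : 0 < α) (hα1 : α < 1) (hT : 0 < T) :
    Summable (fun n => psi α (aa T n) * (aa T n - aa T (n+1))) :=
  Summable.of_nonneg_of_le (psilen_nonneg hα1 hT) (psilen_le_gg hT) (gg_summable hα0 hT)

lemma gg_le_psilen_add {α T : ℝ} (hT : 0 < T) (n : ℕ) :
    gg α T n ≤ psi α (aa T n) * (aa T n - aa T (n+1)) + BB α T n := by
  rw [E1 hT n]
  have hc : (0:ℝ) < (n:ℝ)+1 := by positivity
  have hgB := gg_le_mul_BB (α := α) hT n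
  have hg0 := gg_nonneg (α := α) hT.le n
  have hB0 := BB_nonneg (α := α) hT.le n
  have hd : (0:ℝ) < (n:ℝ)+1+1 := by positivity
  have hid : gg α T n * (((n:ℝ)+1)/((n:ℝ)+1+1))
      = gg α T n - gg α T n/((n:ℝ)+1+1) := by field_simp; ring
  have h1 : gg α T n/((n:ℝ)+1+1) ≤ BB α T n := by
    rw [div_le_iff₀ hd]
    nlinarith
  linarith [hid, h1]

lemma uu_le {α T : ℝ} (hT : 0 < T) (n : ℕ) :
    psi α (aa T (n+1)) * (aa T n - aa T (n+1)) ≤ gg α T (n+1) + 2 * BB α T (n+1) := by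
  rw [E2 hT n]
  have hc : (0:ℝ) < (n:ℝ)+1 := by positivity
  have hc1 : (1:ℝ) ≤ (n:ℝ)+1 := by
    have : (0:ℝ) ≤ (n:ℝ) := Nat.cast_nonneg n
    linarith
  have hgB := gg_le_mul_BB (α := α) hT (n+1)
  push_cast at hgB
  have hg0 := gg_nonneg (α := α) hT.le (n+1)
  have hB0 := BB_nonneg (α := α) hT.le (n+1)
  rw [div_eq_mul_inv, ← mul_assoc, mul_inv_le_iff₀ hc]
  nlinarith

lemma uu_summable {α T : ℝ} (hα0 : 0 < α) (hα1 : α < 1) (hT : 0 < T) :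
    Summable (fun n => psi α (aa T (n+1)) * (aa T n - aa T (n+1))) := by
  apply Summable.of_nonneg_of_le
    (fun n => mul_nonneg (psi_nonneg α (aa_pos hT (n+1)).le)
      (by linarith [aa_anti hT (Nat.le_succ n)]))
    (uu_le hT)
  exact ((summable_nat_add_iff 1).2 (gg_summable hα0 hT)).add
    (((summable_nat_add_iff 1).2 (BB_summable hα0 hT)).mul_left 2)

lemma psi_ae_nonneg {α T : ℝ} :
    0 ≤ᶠ[ae (MeasureTheory.volume.restrict (Ioc (0:ℝ) T))] psi α := by
  rw [EventuallyLE, ae_restrict_iff' measurableSet_Ioc]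
  exact Filter.Eventually.of_forall (fun x hx => psi_nonneg α hx.1.le)

lemma lower_est {α : ℝ} (hα0 : 0 < α) (hα1 : α < 1) {T : ℝ} (hT : 0 < T) :
    T ^ α * ∑' n : ℕ, ((n:ℝ)+1) ^ (-(1+α)) * Real.exp (-T/((n:ℝ)+1))
      ≤ (∫ x in Ioc 0 T, psi α x) + (∑' n : ℕ, ((n:ℝ)+1) ^ (-(1+α))) * T ^ (α-1) := by
  have hF : T ^ α * (∑' n : ℕ, ((n:ℝ)+1) ^ (-(1+α)) * Real.exp (-T/((n:ℝ)+1)))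
      = ∑' n : ℕ, gg α T n := (tsum_mul_left).symm
  rw [hF]
  have h1 : ∑' n : ℕ, gg α T n
      ≤ ∑' n : ℕ, (psi α (aa T n) * (aa T n - aa T (n+1)) + BB α T n) := by
    apply Summable.tsum_le_tsum (gg_le_psilen_add hT) (gg_summable hα0 hT)
    exact (psilen_summable hα0 hα1 hT).add (BB_summable hα0 hT)
  have h2 : ∑' n : ℕ, (psi α (aa T n) * (aa T n - aa T (n+1)) + BB α T n)
      = (∑' n : ℕ, psi α (aa T n) * (aa T n - aa T (n+1))) + ∑' n : ℕ, BB α T n :=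
    Summable.tsum_add (psilen_summable hα0 hα1 hT) (BB_summable hα0 hT)
  have h3 : ∑' n : ℕ, psi α (aa T n) * (aa T n - aa T (n+1)) ≤ ∫ x in Ioc 0 T, psi α x := by
    apply Summable.tsum_le_of_sum_range_le (psilen_summable hα0 hα1 hT)
    intro N
    calc ∑ n ∈ Finset.range N, psi α (aa T n) * (aa T n - aa T (n+1))
        ≤ ∑ n ∈ Finset.range N, ∫ x in Ioc (aa T (n+1)) (aa T n), psi α x := by
          apply Finset.sum_le_sum
          intro n _
          exact int_lb hα0 hα1 (aa_pos hT _) (aa_anti hT (Nat.le_succ n))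
      _ = ∫ x in Ioc (aa T N) (aa T 0), psi α x := telescope hα0 hT N
      _ ≤ ∫ x in Ioc 0 T, psi α x := by
          rw [aa_zero]
          exact setIntegral_mono_set ((psi_integrable hα0).mono_set (fun x hx => hx.1))
            psi_ae_nonneg (HasSubset.Subset.eventuallyLE
              (fun x hx => ⟨lt_trans (aa_pos hT N) hx.1, hx.2⟩))
  have h4 : ∑' n : ℕ, BB α T n = (∑' n : ℕ, ((n:ℝ)+1) ^ (-(1+α))) * T ^ (α-1) := by
    unfold BB
    rw [tsum_mul_left, mul_comm]
  linarith

lemma small_int {α : ℝ} (hα0 : 0 < α) {s : ℝ} (hs : 0 < s) :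
    (∫ x in Ioc 0 s, psi α x) ≤ s ^ α / α := by
  have hval : (∫ x in Ioc (0:ℝ) s, (fun x : ℝ => x ^ (α-1)) x) = s ^ α / α := by
    rw [← intervalIntegral.integral_of_le hs.le]
    rw [integral_rpow (Or.inl (by linarith))]
    have h1 : α - 1 + 1 = α := by ring
    rw [h1, Real.zero_rpow (ne_of_gt hα0)]
    ring
  rw [← hval]
  apply setIntegral_mono_on
  · exact (psi_integrable hα0).mono_set (fun x hx => hx.1)
  · exact (intervalIntegrable_iff_integrableOn_Ioc_of_le hs.le).1
      (intervalIntegral.intervalIntegrable_rpow' (by linarith))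
  · exact measurableSet_Ioc
  · intro x hx
    unfold psi
    have h1 : Real.exp (-x) ≤ 1 := Real.exp_le_one_iff.2 (by linarith [hx.1])
    have h2 : (0:ℝ) ≤ x ^ (α-1) := Real.rpow_nonneg hx.1.le _
    nlinarith

lemma tail_tendsto {α : ℝ} (hα0 : 0 < α) {T : ℝ} (hT : 0 < T) :
    Tendsto (fun N : ℕ => ∫ x in Ioc 0 (aa T N), psi α x) atTop (nhds 0) := by
  have haa : Tendsto (fun N : ℕ => aa T N) atTop (nhds 0) := by
    have h := (tendsto_const_div_atTop_nhds_zero_nat T).comp (tendsto_add_atTop_nat 1)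
    apply h.congr
    intro N
    simp only [Function.comp_apply, aa]
    push_cast
    ring_nf
  have hpow : Tendsto (fun N : ℕ => (aa T N) ^ α / α) atTop (nhds 0) := by
    have h1 := ((Real.continuousAt_rpow_const 0 α (Or.inr hα0.le)).tendsto).comp haa
    rw [Real.zero_rpow (ne_of_gt hα0)] at h1
    simpa using h1.div_const α
  apply tendsto_of_tendsto_of_tendsto_of_le_of_le tendsto_const_nhds hpow
  · intro N
    exact setIntegral_nonneg measurableSet_Ioc (fun x hx => psi_nonneg α hx.1.le)
  · intro N
    exact small_int hα0 (aa_pos hT N)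

lemma upper_est {α : ℝ} (hα0 : 0 < α) (hα1 : α < 1) {T : ℝ} (hT : 0 < T) :
    (∫ x in Ioc 0 T, psi α x)
      ≤ T ^ α * (∑' n : ℕ, ((n:ℝ)+1) ^ (-(1+α)) * Real.exp (-T/((n:ℝ)+1)))
        + 2 * (∑' n : ℕ, ((n:ℝ)+1) ^ (-(1+α))) * T ^ (α-1) := by
  have hF : T ^ α * (∑' n : ℕ, ((n:ℝ)+1) ^ (-(1+α)) * Real.exp (-T/((n:ℝ)+1)))
      = ∑' n : ℕ, gg α T n := (tsum_mul_left).symm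
  rw [hF]
  have hstep : ∀ N : ℕ, (∫ x in Ioc 0 T, psi α x)
      ≤ (∫ x in Ioc 0 (aa T N), psi α x)
        + ∑' n : ℕ, psi α (aa T (n+1)) * (aa T n - aa T (n+1)) := by
    intro N
    have hsub : aa T N ≤ T := by
      have h := aa_anti hT (Nat.zero_le N); rwa [aa_zero] at h
    have hsplit : (∫ x in Ioc 0 T, psi α x)
        = (∫ x in Ioc 0 (aa T N), psi α x) + ∫ x in Ioc (aa T N) T, psi α x := by
      have hdisj : Disjoint (Ioc (0:ℝ) (aa T N)) (Ioc (aa T N) T) := by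
        rw [Set.Ioc_disjoint_Ioc]
        exact (min_le_left _ _).trans (le_max_right _ _)
      have hu := setIntegral_union (μ := MeasureTheory.volume) (f := psi α) hdisj
        measurableSet_Ioc ((psi_integrable hα0).mono_set (fun x hx => hx.1))
        (psi_int_Ioc hα0 (aa_pos hT N))
      rwa [Ioc_union_Ioc_eq_Ioc (aa_pos hT N).le hsub] at hu
    rw [hsplit]
    apply add_le_add_right
    have h5 : (∫ x in Ioc (aa T N) T, psi α x)
        = ∑ n ∈ Finset.range N, ∫ x in Ioc (aa T (n+1)) (aa T n), psi α x := by
      rw [telescope hα0 hT N, aa_zero]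
    rw [h5]
    calc ∑ n ∈ Finset.range N, ∫ x in Ioc (aa T (n+1)) (aa T n), psi α x
        ≤ ∑ n ∈ Finset.range N, psi α (aa T (n+1)) * (aa T n - aa T (n+1)) := by
          apply Finset.sum_le_sum
          intro n _
          exact int_ub hα0 hα1 (aa_pos hT _) (aa_anti hT (Nat.le_succ n))
      _ ≤ ∑' n : ℕ, psi α (aa T (n+1)) * (aa T n - aa T (n+1)) := by
          apply Summable.sum_le_tsum
          · intro n _
            exact mul_nonneg (psi_nonneg α (aa_pos hT (n+1)).le)
              (by linarith [aa_anti hT (Nat.le_succ n)])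
          · exact uu_summable hα0 hα1 hT
  have hlim : (∫ x in Ioc 0 T, psi α x)
      ≤ ∑' n : ℕ, psi α (aa T (n+1)) * (aa T n - aa T (n+1)) := by
    have h := (tail_tendsto hα0 hT).add_const
      (∑' n : ℕ, psi α (aa T (n+1)) * (aa T n - aa T (n+1)))
    rw [zero_add] at h
    exact ge_of_tendsto' h hstep
  have h6 : ∑' n : ℕ, psi α (aa T (n+1)) * (aa T n - aa T (n+1))
      ≤ ∑' n : ℕ, (gg α T (n+1) + 2 * BB α T (n+1)) := by
    apply Summable.tsum_le_tsum (uu_le hT) (uu_summable hα0 hα1 hT)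
    exact ((summable_nat_add_iff 1).2 (gg_summable hα0 hT)).add
      (((summable_nat_add_iff 1).2 (BB_summable hα0 hT)).mul_left 2)
  have h7 : ∑' n : ℕ, (gg α T (n+1) + 2 * BB α T (n+1))
      = (∑' n : ℕ, gg α T (n+1)) + 2 * ∑' n : ℕ, BB α T (n+1) := by
    rw [Summable.tsum_add ((summable_nat_add_iff 1).2 (gg_summable hα0 hT))
      (((summable_nat_add_iff 1).2 (BB_summable hα0 hT)).mul_left 2), tsum_mul_left]
  have h8 : (∑' n : ℕ, gg α T (n+1)) ≤ ∑' n : ℕ, gg α T n := by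
    rw [Summable.tsum_eq_zero_add (gg_summable hα0 hT)]
    linarith [gg_nonneg (α := α) hT.le 0]
  have h9 : (∑' n : ℕ, BB α T (n+1)) ≤ ∑' n : ℕ, BB α T n := by
    rw [Summable.tsum_eq_zero_add (BB_summable hα0 hT)]
    linarith [BB_nonneg (α := α) hT.le 0]
  have h10 : ∑' n : ℕ, BB α T n = (∑' n : ℕ, ((n:ℝ)+1) ^ (-(1+α))) * T ^ (α-1) := by
    unfold BB
    rw [tsum_mul_left, mul_comm]
  calc (∫ x in Ioc 0 T, psi α x)
      ≤ ∑' n : ℕ, psi α (aa T (n+1)) * (aa T n - aa T (n+1)) := hlim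
    _ ≤ (∑' n : ℕ, gg α T (n+1)) + 2 * ∑' n : ℕ, BB α T (n+1) := by rw [← h7]; exact h6
    _ ≤ (∑' n : ℕ, gg α T n) + 2 * ((∑' n : ℕ, ((n:ℝ)+1) ^ (-(1+α))) * T ^ (α-1)) := by
        have := h9
        rw [h10] at this
        nlinarith
    _ = (∑' n : ℕ, gg α T n) + 2 * (∑' n : ℕ, ((n:ℝ)+1) ^ (-(1+α))) * T ^ (α-1) := by ring

lemma key {α : ℝ} (hα0 : 0 < α) (hα1 : α < 1) :
    Tendsto (fun T : ℝ => T ^ α * ∑' n : ℕ, ((n:ℝ)+1) ^ (-(1+α)) * Real.exp (-T/((n:ℝ)+1)))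
      atTop (nhds (Real.Gamma α)) := by
  have hI : Tendsto (fun T : ℝ => ∫ x in Ioc 0 T, psi α x) atTop (nhds (Real.Gamma α)) := by
    have h0 := MeasureTheory.intervalIntegral_tendsto_integral_Ioi 0
      (psi_integrable hα0) (tendsto_id (α := ℝ))
    have hGa : (∫ x in Ioi (0:ℝ), psi α x) = Real.Gamma α := by
      rw [Real.Gamma_eq_integral hα0]; rfl
    rw [hGa] at h0
    apply h0.congr'
    filter_upwards [eventually_ge_atTop (0:ℝ)] with T hT
    simp only [id_eq]
    rw [intervalIntegral.integral_of_le hT]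
  have hpow : Tendsto (fun T : ℝ => T ^ (α-1)) atTop (nhds 0) := by
    have h := tendsto_rpow_neg_atTop (show (0:ℝ) < 1 - α by linarith)
    simpa [neg_sub] using h
  set Z := ∑' n : ℕ, ((n:ℝ)+1) ^ (-(1+α)) with hZ
  apply tendsto_of_tendsto_of_tendsto_of_le_of_le'
    (g := fun T => (∫ x in Ioc 0 T, psi α x) - 2 * Z * T ^ (α-1))
    (h := fun T => (∫ x in Ioc 0 T, psi α x) + Z * T ^ (α-1))
  · have := hI.sub ((hpow.const_mul (2 * Z)))
    simpa using this
  · have := hI.add ((hpow.const_mul Z))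
    simpa using this
  · filter_upwards [eventually_gt_atTop (0:ℝ)] with T hT
    have := upper_est hα0 hα1 hT
    linarith
  · filter_upwards [eventually_gt_atTop (0:ℝ)] with T hT
    have := lower_est hα0 hα1 hT
    linarith

end OUaux

/-- `L` is slowly varying at infinity, and consequently
`R(t) = C₂ ∑_{k=1}^∞ k^{-(1+2(1-H))} e^{-λt/k}` can be written as a slowly varying
function divided by `t^{2(1-H)}`. -/
theorem stmt3 (H lam C2 : ℝ) (hH : H ∈ Set.Ioo (1 / 2 : ℝ) 1)
    (hlam : 0 < lam) (hC2 : 0 < C2) :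
    (∀ v : ℝ, 0 < v →
      Tendsto (fun t : ℝ => OUslow H lam C2 (t * v) / OUslow H lam C2 t)
        atTop (nhds 1)) ∧
    ∃ Lf : ℝ → ℝ,
      (∀ v : ℝ, 0 < v →
        Tendsto (fun t : ℝ => Lf (t * v) / Lf t) atTop (nhds 1)) ∧
      ∀ t : ℝ, 0 < t → C2 * OUsum H lam t = Lf t / t ^ (2 * (1 - H)) := by
  obtain ⟨hH1, hH2⟩ := hH
  have hα0 : 0 < 2 * (1 - H) := by linarith
  have hα1 : 2 * (1 - H) < 1 := by linarith
  have hΓ : 0 < Real.Gamma (2 * (1 - H)) := Real.Gamma_pos_of_pos hα0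
  -- the basic limit
  have hG : Tendsto (fun t : ℝ => (lam * t) ^ (2 * (1 - H)) * OUsum H lam t)
      atTop (nhds (Real.Gamma (2 * (1 - H)))) := by
    have hcomp : Tendsto (fun t : ℝ => lam * t) atTop atTop :=
      Tendsto.const_mul_atTop hlam tendsto_id
    have := (OUaux.key hα0 hα1).comp hcomp
    exact this
  have hOUslow : Tendsto (fun t : ℝ => OUslow H lam C2 t) atTop
      (nhds (C2 * Real.Gamma (2 * (1 - H)))) := by
    have h := hG.const_mul C2
    apply h.congr'
    filter_upwards [eventually_gt_atTop (0:ℝ)] with t ht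
    rw [show OUslow H lam C2 t = C2 * (lam * t) ^ (2 * (1 - H)) * OUsum H lam t from if_neg (ne_of_gt ht), mul_assoc]
  have hmain : ∀ v : ℝ, 0 < v →
      Tendsto (fun t : ℝ => OUslow H lam C2 (t * v) / OUslow H lam C2 t) atTop (nhds 1) := by
    intro v hv
    have hcomp : Tendsto (fun t : ℝ => t * v) atTop atTop :=
      Tendsto.atTop_mul_const hv tendsto_id
    have h1 : Tendsto (fun t : ℝ => OUslow H lam C2 (t * v)) atTop
        (nhds (C2 * Real.Gamma (2 * (1 - H)))) := hOUslow.comp hcomp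
    have h2 := h1.div hOUslow (ne_of_gt (mul_pos hC2 hΓ))
    rwa [div_self (ne_of_gt (mul_pos hC2 hΓ))] at h2
  refine ⟨hmain, fun t => OUslow H lam C2 t / lam ^ (2 * (1 - H)), ?_, ?_⟩
  · intro v hv
    have hlne : lam ^ (2 * (1 - H)) ≠ 0 := ne_of_gt (Real.rpow_pos_of_pos hlam _)
    have heq : ∀ a b : ℝ, (a / lam ^ (2 * (1 - H))) / (b / lam ^ (2 * (1 - H))) = a / b := by
      intro a b
      rw [div_div_div_cancel_right₀]
      exact hlne
    have := hmain v hv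
    apply this.congr
    intro t
    rw [heq]
  · intro t ht
    show C2 * OUsum H lam t = OUslow H lam C2 t / lam ^ (2 * (1 - H)) / t ^ (2 * (1 - H))
    rw [show OUslow H lam C2 t = C2 * (lam * t) ^ (2 * (1 - H)) * OUsum H lam t from if_neg (ne_of_gt ht), Real.mul_rpow hlam.le ht.le]
    have hlne : lam ^ (2 * (1 - H)) ≠ 0 := ne_of_gt (Real.rpow_pos_of_pos hlam _)
    have htne : t ^ (2 * (1 - H)) ≠ 0 := ne_of_gt (Real.rpow_pos_of_pos ht _)
    field_simp
end

section
/- As t → ∞, L(t) converges to the finite positive constant C₂·Γ(2(1-H)), where Γ is the Gamma function. -/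
open Filter

namespace OUproof

open MeasureTheory Set

noncomputable def F (a x u : ℝ) : ℝ := u ^ (-(1 + a)) * Real.exp (-x / u)

lemma F_nonneg {a x u : ℝ} (hu : 0 ≤ u) : 0 ≤ F a x u :=
  mul_nonneg (Real.rpow_nonneg hu _) (Real.exp_pos _).le

lemma F_zero {a x : ℝ} (ha : 0 ≤ a) : F a x 0 = 0 := by
  rw [F, Real.zero_rpow (by intro h; nlinarith [h]), zero_mul]

lemma F_eq_exp {a x u : ℝ} (hu : 0 < u) :
    F a x u = Real.exp (Real.log u * (-(1 + a)) + -x / u) := by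
  rw [F, Real.rpow_def_of_pos hu, ← Real.exp_add]

lemma F_mono {a x u v : ℝ} (ha : 0 ≤ a) (hu : 0 < u) (huv : u ≤ v)
    (hv : v * (1 + a) ≤ x) : F a x u ≤ F a x v := by
  have hv0 : 0 < v := lt_of_lt_of_le hu huv
  rw [F_eq_exp hu, F_eq_exp hv0, Real.exp_le_exp, neg_div, neg_div]
  have hlog : Real.log v - Real.log u ≤ (v - u) / u := by
    have h := Real.log_le_sub_one_of_pos (div_pos hv0 hu)
    rw [Real.log_div hv0.ne' hu.ne'] at h
    have h2 : v / u - 1 = (v - u) / u := by field_simp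
    linarith [h2 ▸ h]
  have key : (1 + a) * ((v - u) / u) ≤ x / u - x / v := by
    rw [div_sub_div _ _ hu.ne' hv0.ne', mul_div_assoc', div_le_div_iff₀ hu (by positivity)]
    nlinarith [mul_nonneg (mul_nonneg (sub_nonneg.2 hv) (sub_nonneg.2 huv)) hu.le]
  have h3 := mul_le_mul_of_nonneg_left hlog (by linarith : (0:ℝ) ≤ 1 + a)
  nlinarith [h3, key]

lemma F_anti {a x u v : ℝ} (ha : 0 ≤ a) (hu : 0 < u) (huv : u ≤ v)
    (hv : x ≤ u * (1 + a)) : F a x v ≤ F a x u := by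
  have hv0 : 0 < v := lt_of_lt_of_le hu huv
  rw [F_eq_exp hu, F_eq_exp hv0, Real.exp_le_exp, neg_div, neg_div]
  have hlog : (v - u) / v ≤ Real.log v - Real.log u := by
    have h := Real.log_le_sub_one_of_pos (div_pos hu hv0)
    rw [Real.log_div hu.ne' hv0.ne'] at h
    have h2 : u / v - 1 = -((v - u) / v) := by field_simp; ring
    linarith [h2 ▸ h]
  have key : x / u - x / v ≤ (1 + a) * ((v - u) / v) := by
    rw [div_sub_div _ _ hu.ne' hv0.ne', mul_div_assoc', div_le_div_iff₀ (by positivity) hv0]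
    nlinarith [mul_nonneg (mul_nonneg (sub_nonneg.2 hv) (sub_nonneg.2 huv)) hv0.le]
  have h3 := mul_le_mul_of_nonneg_left hlog (by linarith : (0:ℝ) ≤ 1 + a)
  nlinarith [h3, key]

lemma aux_pow_exp {a s : ℝ} (ha : 0 ≤ a) (ha1 : a ≤ 1) (hs : 0 ≤ s) :
    s ^ (1 + a) * Real.exp (-s) ≤ 27 := by
  rcases le_total s 1 with h1 | h1
  · have e1 : s ^ (1 + a) ≤ 1 := Real.rpow_le_one hs h1 (by linarith)
    have e2 : Real.exp (-s) ≤ 1 := Real.exp_le_one_iff.2 (by linarith)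
    nlinarith [Real.exp_pos (-s), Real.rpow_nonneg hs (1 + a)]
  · have e1 : s ^ (1 + a) ≤ s ^ (2:ℝ) := Real.rpow_le_rpow_of_exponent_le h1 (by linarith)
    have e2 : s ^ (2:ℝ) = s ^ 2 := by
      rw [show (2:ℝ) = ((2:ℕ):ℝ) by norm_num, Real.rpow_natCast]
    have e3 : s ^ 3 / 27 ≤ Real.exp s := by
      have h := Real.add_one_le_exp (s / 3)
      have h4 : (s / 3 + 1) ^ 3 ≤ Real.exp (s / 3) ^ 3 :=
        pow_le_pow_left₀ (by positivity) h 3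
      have h5 : Real.exp (s / 3) ^ 3 = Real.exp s := by
        rw [← Real.exp_nat_mul]; congr 1; push_cast; ring
      nlinarith [h4, h5]
    have e4 : Real.exp (-s) = (Real.exp s)⁻¹ := Real.exp_neg s
    have e5 : s ^ 2 * Real.exp (-s) ≤ 27 := by
      rw [e4, mul_inv_le_iff₀ (Real.exp_pos s)]
      nlinarith [e3, h1]
    calc s ^ (1 + a) * Real.exp (-s) ≤ s ^ (2:ℝ) * Real.exp (-s) :=
          mul_le_mul_of_nonneg_right e1 (Real.exp_pos _).le
      _ ≤ 27 := by rw [e2]; exact e5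

lemma F_le {a x u : ℝ} (ha : 0 ≤ a) (ha1 : a ≤ 1) (hx : 0 < x) (hu : 0 < u) :
    F a x u ≤ 27 * x ^ (-(1 + a)) := by
  set s := x / u with hs
  have hs0 : 0 < s := div_pos hx hu
  have hxp : (0:ℝ) < x ^ (1 + a) := Real.rpow_pos_of_pos hx _
  have hup : (0:ℝ) < u ^ (1 + a) := Real.rpow_pos_of_pos hu _
  have h1 : u ^ (-(1 + a)) = x ^ (-(1 + a)) * s ^ (1 + a) := by
    rw [hs, Real.div_rpow hx.le hu.le, Real.rpow_neg hx.le, Real.rpow_neg hu.le]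
    field_simp
  have h2 : Real.exp (-x / u) = Real.exp (-s) := by rw [hs, neg_div]
  have key := aux_pow_exp ha ha1 hs0.le
  have hxn : (0:ℝ) ≤ x ^ (-(1 + a)) := Real.rpow_nonneg hx.le _
  calc F a x u = x ^ (-(1 + a)) * (s ^ (1 + a) * Real.exp (-s)) := by
        rw [F, h1, h2]; ring
    _ ≤ x ^ (-(1 + a)) * 27 := mul_le_mul_of_nonneg_left key hxn
    _ = 27 * x ^ (-(1 + a)) := mul_comm _ _

lemma F_contOn {a x : ℝ} : ContinuousOn (F a x) (Ioi 0) := by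
  intro u hu
  have hu0 : (u:ℝ) ≠ 0 := (mem_Ioi.1 hu).ne'
  apply ContinuousAt.continuousWithinAt
  exact ((Real.continuousAt_rpow_const u _ (Or.inl hu0)).mul
    ((Real.continuous_exp.continuousAt).comp ((continuousAt_const.div continuousAt_id hu0))))

lemma F_aesm {a x : ℝ} {s : Set ℝ} (hs : s ⊆ Ioi 0) :
    AEStronglyMeasurable (F a x) (volume.restrict s) :=
  (F_contOn.aestronglyMeasurable measurableSet_Ioi).mono_measure
    (Measure.restrict_mono hs le_rfl)

lemma F_integrableOn {a x : ℝ} (ha : 0 < a) (ha1 : a ≤ 1) (hx : 0 < x) :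
    IntegrableOn (F a x) (Ioi 0) := by
  have h1 : IntegrableOn (F a x) (Ioc 0 1) := by
    refine ⟨F_aesm Ioc_subset_Ioi_self, ?_⟩
    apply HasFiniteIntegral.restrict_of_bounded (C := 27 * x ^ (-(1 + a))) measure_Ioc_lt_top
    refine (ae_restrict_iff' measurableSet_Ioc).2 (ae_of_all _ fun u hu => ?_)
    rw [Real.norm_eq_abs, abs_of_nonneg (F_nonneg hu.1.le)]
    exact F_le ha.le ha1 hx hu.1
  have h2 : IntegrableOn (F a x) (Ioi 1) := by
    apply Integrable.mono' (integrableOn_Ioi_rpow_of_lt (by linarith : -(1 + a) < -1) one_pos)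
      (F_aesm (Ioi_subset_Ioi zero_le_one))
    refine (ae_restrict_iff' measurableSet_Ioi).2 (ae_of_all _ fun u hu => ?_)
    have hu0 : (0:ℝ) < u := lt_trans one_pos hu
    rw [Real.norm_eq_abs, abs_of_nonneg (F_nonneg hu0.le)]
    calc F a x u ≤ u ^ (-(1 + a)) * 1 := by
          apply mul_le_mul_of_nonneg_left _ (Real.rpow_nonneg hu0.le _)
          exact Real.exp_le_one_iff.2 (by rw [neg_div]; exact neg_nonpos.2 (by positivity))
      _ = u ^ (-(1 + a)) := mul_one _
  have := h1.union h2
  rwa [Ioc_union_Ioi_eq_Ioi zero_le_one] at this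


lemma F_intervalIntegrable {a x c d : ℝ} (ha : 0 < a) (ha1 : a ≤ 1) (hx : 0 < x)
    (h0 : 0 ≤ c) (hcd : c ≤ d) : IntervalIntegrable (F a x) volume c d := by
  rw [intervalIntegrable_iff, uIoc_of_le hcd]
  exact (F_integrableOn ha ha1 hx).mono_set (fun u hu => lt_of_le_of_lt h0 hu.1)

lemma step_upper {a x c d B : ℝ} (ha : 0 < a) (ha1 : a ≤ 1) (hx : 0 < x)
    (h0 : 0 ≤ c) (hcd : c ≤ d) (hB : ∀ u ∈ Set.Icc c d, F a x u ≤ B) :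
    ∫ u in c..d, F a x u ≤ (d - c) * B := by
  have h := intervalIntegral.integral_mono_on hcd
    (F_intervalIntegrable ha ha1 hx h0 hcd) intervalIntegrable_const hB
  rwa [intervalIntegral.integral_const, smul_eq_mul] at h

lemma step_lower {a x c d B : ℝ} (ha : 0 < a) (ha1 : a ≤ 1) (hx : 0 < x)
    (h0 : 0 ≤ c) (hcd : c ≤ d) (hB : ∀ u ∈ Set.Icc c d, B ≤ F a x u) :
    (d - c) * B ≤ ∫ u in c..d, F a x u := by
  have h := intervalIntegral.integral_mono_on hcd
    intervalIntegrable_const (F_intervalIntegrable ha ha1 hx h0 hcd) hB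
  rwa [intervalIntegral.integral_const, smul_eq_mul] at h

lemma F_split {a x c d : ℝ} (ha : 0 < a) (ha1 : a ≤ 1) (hx : 0 < x)
    (h0 : 0 ≤ c) (hcd : c ≤ d) :
    ∫ u in Ioi c, F a x u = (∫ u in c..d, F a x u) + ∫ u in Ioi d, F a x u := by
  have hFi := F_integrableOn ha ha1 hx
  rw [intervalIntegral.integral_of_le hcd, ← setIntegral_union (Ioc_disjoint_Ioi le_rfl)
    measurableSet_Ioi
    (hFi.mono_set (fun u hu => lt_of_le_of_lt h0 hu.1))
    (hFi.mono_set (Ioi_subset_Ioi (le_trans h0 hcd))),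
    Ioc_union_Ioi_eq_Ioi hcd]

lemma F_integral {a x : ℝ} (ha : 0 < a) (ha1 : a ≤ 1) (hx : 0 < x) :
    ∫ u in Ioi (0:ℝ), F a x u = x ^ (-a) * Real.Gamma a := by
  have h1 : ∫ u in Ioi (0:ℝ), F a x u
      = ∫ s in Ioi (0:ℝ), s ^ (a - 1) * Real.exp (-x * s) := by
    rw [← integral_comp_rpow_Ioi (fun s => s ^ (a - 1) * Real.exp (-x * s))
      (p := (-1:ℝ)) (by norm_num)]
    refine setIntegral_congr_fun measurableSet_Ioi (fun u hu => ?_)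
    have hu0 : (0:ℝ) < u := hu
    have h2 : u ^ (-1:ℝ) = u⁻¹ := Real.rpow_neg_one u
    rw [h2, smul_eq_mul, F]
    have h3 : (u⁻¹) ^ (a - 1) = u ^ (1 - a) := by
      rw [← Real.rpow_neg_one u, ← Real.rpow_mul hu0.le]
      congr 1; ring
    rw [h3]
    have h4 : |(-1:ℝ)| * u ^ ((-1:ℝ) - 1) = u ^ (-2:ℝ) := by
      rw [abs_neg, abs_one, one_mul]; norm_num
    rw [h4]
    have h5 : u ^ (-2:ℝ) * (u ^ (1 - a) * Real.exp (-x * u⁻¹))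
        = u ^ (-(1 + a)) * Real.exp (-x / u) := by
      rw [← mul_assoc, ← Real.rpow_add hu0, div_eq_mul_inv]
      congr 2
      ring
    rw [h5]
  rw [h1]
  have h6 := integral_rpow_mul_exp_neg_mul_rpow (p := 1) (q := a - 1) (b := x)
    one_pos (by linarith) hx
  simp only [Real.rpow_one] at h6
  rw [h6]
  norm_num


lemma F_summable {a x : ℝ} (ha : 0 < a) (hx : 0 < x) :
    Summable (fun k : ℕ => F a x ((k:ℝ) + 1)) := by
  have hg : Summable (fun k : ℕ => ((k:ℝ) + 1) ^ (-(1 + a))) := by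
    have h := (summable_nat_add_iff 1).2
      (Real.summable_nat_rpow.2 (by linarith : -(1 + a) < -1))
    refine h.congr fun n => ?_
    congr 1
    push_cast
    ring
  apply Summable.of_nonneg_of_le (fun k => F_nonneg (by positivity)) (fun k => ?_) hg
  rw [F]
  apply mul_le_of_le_one_right (Real.rpow_nonneg (by positivity) _)
  exact Real.exp_le_one_iff.2 (by rw [neg_div]; exact neg_nonpos.2 (by positivity))

lemma sandwich {a x : ℝ} (ha : 0 < a) (ha1 : a ≤ 1) (hx : 4 * (1 + a) ≤ x) :
    x ^ (-a) * Real.Gamma a - 3 * (27 * x ^ (-(1 + a))) ≤ (∑' k : ℕ, F a x ((k:ℝ) + 1)) ∧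
    (∑' k : ℕ, F a x ((k:ℝ) + 1)) ≤ x ^ (-a) * Real.Gamma a + 2 * (27 * x ^ (-(1 + a))) := by
  have hb : (0:ℝ) < 1 + a := by linarith
  have hx0 : (0:ℝ) < x := by nlinarith
  set M := 27 * x ^ (-(1 + a)) with hM
  have hM0 : (0:ℝ) ≤ M := by positivity
  set m : ℕ := ⌊x / (1 + a)⌋₊ with hmdef
  have hm4 : 4 ≤ m := Nat.le_floor (by rw [le_div_iff₀ hb]; push_cast; linarith)
  have hmle : (m:ℝ) * (1 + a) ≤ x := by
    rw [← le_div_iff₀ hb]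
    exact Nat.floor_le (by positivity)
  have hmgt : x ≤ ((m:ℝ) + 1) * (1 + a) := by
    rw [← div_le_iff₀ hb]
    exact (Nat.lt_floor_add_one _).le
  obtain ⟨p, hp⟩ : ∃ p : ℕ, m = p + 1 := ⟨m - 1, by omega⟩
  have hpm : (p:ℝ) + 1 = (m:ℝ) := by rw [hp]; push_cast; ring
  have hsum := F_summable ha hx0
  have hint : ∀ c d : ℝ, 0 ≤ c → c ≤ d → IntervalIntegrable (F a x) volume c d :=
    fun c d h0 hcd => F_intervalIntegrable ha ha1 hx0 h0 hcd
  -- adjacent intervals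
  have hadj : ∀ (c : ℝ), 0 ≤ c → ∀ n : ℕ,
      (∑ j ∈ Finset.range n, ∫ u in (c + (j:ℝ))..(c + ((j:ℝ) + 1)), F a x u)
        = ∫ u in c..(c + (n:ℝ)), F a x u := by
    intro c hc n
    have h := intervalIntegral.sum_integral_adjacent_intervals
      (f := F a x) (μ := volume) (a := fun j : ℕ => c + (j:ℝ)) (n := n) (fun k _ => by
        apply hint _ _ (add_nonneg hc (Nat.cast_nonneg k))
        push_cast
        linarith)
    push_cast at h
    rw [add_zero] at h
    exact h
  -- nonneg of interval integrals
  have hinn : ∀ c d : ℝ, 0 ≤ c → c ≤ d → 0 ≤ ∫ u in c..d, F a x u := by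
    intro c d h0 hcd
    exact intervalIntegral.integral_nonneg hcd (fun u hu => F_nonneg (le_trans h0 hu.1))
  have hMb : ∀ u : ℝ, 0 < u → F a x u ≤ M := fun u hu => F_le ha.le ha1 hx0 hu
  -- tail upper bound
  have tail_ub : (∑' j : ℕ, F a x ((m:ℝ) + 2 + (j:ℝ))) ≤ ∫ u in Ioi ((m:ℝ) + 1), F a x u := by
    apply Real.tsum_le_of_sum_range_le (fun n => F_nonneg (by positivity))
    intro n
    have hterm : ∀ j : ℕ, F a x ((m:ℝ) + 2 + (j:ℝ))
        ≤ ∫ u in ((m:ℝ) + 1 + (j:ℝ))..((m:ℝ) + 1 + ((j:ℝ) + 1)), F a x u := by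
      intro j
      have h := step_lower (B := F a x ((m:ℝ) + 2 + (j:ℝ))) ha ha1 hx0
        (c := (m:ℝ) + 1 + (j:ℝ)) (d := (m:ℝ) + 1 + ((j:ℝ) + 1)) (by positivity) (by linarith) ?_
      · have e : ((m:ℝ) + 1 + ((j:ℝ) + 1)) - ((m:ℝ) + 1 + (j:ℝ)) = 1 := by ring
        rw [e, one_mul] at h
        exact h
      · intro u hu
        apply F_anti ha.le (by nlinarith [hu.1, Nat.cast_nonneg (α := ℝ) m, Nat.cast_nonneg (α := ℝ) j] : (0:ℝ) < u)
          (by linarith [hu.2])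
        have h1 : (m:ℝ) + 1 ≤ u := by linarith [hu.1, Nat.cast_nonneg (α := ℝ) j]
        calc x ≤ ((m:ℝ) + 1) * (1 + a) := hmgt
          _ ≤ u * (1 + a) := mul_le_mul_of_nonneg_right h1 hb.le
    calc ∑ j ∈ Finset.range n, F a x ((m:ℝ) + 2 + (j:ℝ))
        ≤ ∑ j ∈ Finset.range n, ∫ u in ((m:ℝ) + 1 + (j:ℝ))..((m:ℝ) + 1 + ((j:ℝ) + 1)), F a x u :=
          Finset.sum_le_sum (fun j _ => hterm j)
      _ = ∫ u in ((m:ℝ) + 1)..((m:ℝ) + 1 + (n:ℝ)), F a x u := hadj _ (by positivity) n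
      _ ≤ ∫ u in Ioi ((m:ℝ) + 1), F a x u := by
          rw [intervalIntegral.integral_of_le (by linarith [Nat.cast_nonneg (α := ℝ) n])]
          apply setIntegral_mono_set
            ((F_integrableOn ha ha1 hx0).mono_set (Ioi_subset_Ioi (by positivity)))
            ((ae_restrict_iff' measurableSet_Ioi).2 (ae_of_all _ fun u hu =>
              F_nonneg (le_of_lt (lt_of_le_of_lt (by positivity) hu))))
            (HasSubset.Subset.eventuallyLE Ioc_subset_Ioi_self)
  -- tail lower bound
  have hsumT : Summable (fun j : ℕ => F a x ((m:ℝ) + 2 + (j:ℝ))) := by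
    have h := (summable_nat_add_iff (m + 1)).2 hsum
    refine h.congr fun j => ?_
    congr 1
    push_cast
    ring
  have tail_lb : (∫ u in Ioi ((m:ℝ) + 2), F a x u) ≤ ∑' j : ℕ, F a x ((m:ℝ) + 2 + (j:ℝ)) := by
    have ht : Tendsto (fun n : ℕ => ∫ u in ((m:ℝ) + 2)..((m:ℝ) + 2 + (n:ℝ)), F a x u) atTop
        (nhds (∫ u in Ioi ((m:ℝ) + 2), F a x u)) := by
      apply intervalIntegral_tendsto_integral_Ioi _
        ((F_integrableOn ha ha1 hx0).mono_set (Ioi_subset_Ioi (by positivity)))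
      exact tendsto_atTop_add_const_left _ _ tendsto_natCast_atTop_atTop
    apply le_of_tendsto ht
    filter_upwards with n
    have hterm : ∀ j : ℕ, (∫ u in ((m:ℝ) + 2 + (j:ℝ))..((m:ℝ) + 2 + ((j:ℝ) + 1)), F a x u)
        ≤ F a x ((m:ℝ) + 2 + (j:ℝ)) := by
      intro j
      have h := step_upper (B := F a x ((m:ℝ) + 2 + (j:ℝ))) ha ha1 hx0
        (c := (m:ℝ) + 2 + (j:ℝ)) (d := (m:ℝ) + 2 + ((j:ℝ) + 1)) (by positivity) (by linarith) ?_
      · have e : ((m:ℝ) + 2 + ((j:ℝ) + 1)) - ((m:ℝ) + 2 + (j:ℝ)) = 1 := by ring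
        rw [e, one_mul] at h
        exact h
      · intro u hu
        apply F_anti ha.le (by positivity) hu.1
        calc x ≤ ((m:ℝ) + 1) * (1 + a) := hmgt
          _ ≤ ((m:ℝ) + 2 + (j:ℝ)) * (1 + a) := by
              apply mul_le_mul_of_nonneg_right _ hb.le
              have := Nat.cast_nonneg (α := ℝ) j
              linarith
    calc (∫ u in ((m:ℝ) + 2)..((m:ℝ) + 2 + (n:ℝ)), F a x u)
        = ∑ j ∈ Finset.range n, ∫ u in ((m:ℝ) + 2 + (j:ℝ))..((m:ℝ) + 2 + ((j:ℝ) + 1)), F a x u :=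
          (hadj _ (by positivity) n).symm
      _ ≤ ∑ j ∈ Finset.range n, F a x ((m:ℝ) + 2 + (j:ℝ)) :=
          Finset.sum_le_sum (fun j _ => hterm j)
      _ ≤ ∑' j : ℕ, F a x ((m:ℝ) + 2 + (j:ℝ)) :=
          Summable.sum_le_tsum _ (fun j _ => F_nonneg (by positivity)) hsumT
  -- finite part, monotone region
  have hkle : ∀ k : ℕ, k ∈ Finset.range p → ((k:ℝ) + 2) * (1 + a) ≤ x := by
    intro k hk
    have hk' : (k:ℝ) + 1 ≤ (p:ℝ) := by exact_mod_cast Nat.succ_le_of_lt (Finset.mem_range.1 hk)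
    calc ((k:ℝ) + 2) * (1 + a) ≤ (m:ℝ) * (1 + a) := by
          apply mul_le_mul_of_nonneg_right _ hb.le
          linarith [hpm]
      _ ≤ x := hmle
  have up_fin : (∑ k ∈ Finset.range p, F a x ((k:ℝ) + 1))
      ≤ ∫ u in (1:ℝ)..(1 + (p:ℝ)), F a x u := by
    rw [← hadj 1 zero_le_one p]
    apply Finset.sum_le_sum
    intro k hk
    have h := step_lower (B := F a x ((k:ℝ) + 1)) ha ha1 hx0
      (c := 1 + (k:ℝ)) (d := 1 + ((k:ℝ) + 1)) (by positivity) (by linarith) ?_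
    · have e : (1 + ((k:ℝ) + 1)) - (1 + (k:ℝ)) = 1 := by ring
      rw [e, one_mul] at h
      exact h
    · intro u hu
      apply F_mono ha.le (by positivity) (by linarith [hu.1])
      calc u * (1 + a) ≤ ((k:ℝ) + 2) * (1 + a) :=
            mul_le_mul_of_nonneg_right (by linarith [hu.2]) hb.le
        _ ≤ x := hkle k hk
  have low_fin : (∫ u in (1:ℝ)..(1 + (p:ℝ)), F a x u)
      ≤ ∑ k ∈ Finset.range p, F a x ((k:ℝ) + 2) := by
    rw [← hadj 1 zero_le_one p]
    apply Finset.sum_le_sum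
    intro k hk
    have h := step_upper (B := F a x ((k:ℝ) + 2)) ha ha1 hx0
      (c := 1 + (k:ℝ)) (d := 1 + ((k:ℝ) + 1)) (by positivity) (by linarith) ?_
    · have e : (1 + ((k:ℝ) + 1)) - (1 + (k:ℝ)) = 1 := by ring
      rw [e, one_mul] at h
      exact h
    · intro u hu
      apply F_mono ha.le (by nlinarith [hu.1, Nat.cast_nonneg (α := ℝ) k] : (0:ℝ) < u)
        (by linarith [hu.2])
      exact hkle k hk
  -- S1 representations
  have hS1eq : (∑ k ∈ Finset.range (m + 1), F a x ((k:ℝ) + 1))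
      = (∑ k ∈ Finset.range p, F a x ((k:ℝ) + 1)) + F a x (m:ℝ) + F a x ((m:ℝ) + 1) := by
    rw [hp, Finset.sum_range_succ, Finset.sum_range_succ]
    push_cast
    rfl
  have hS1eq2 : (∑ k ∈ Finset.range (m + 1), F a x ((k:ℝ) + 1))
      = (∑ k ∈ Finset.range p, F a x ((k:ℝ) + 2)) + F a x 1 + F a x ((m:ℝ) + 1) := by
    rw [hp, Finset.sum_range_succ, Finset.sum_range_succ']
    push_cast
    congr 1
    congr 1
    · exact Finset.sum_congr rfl fun k _ => by congr 1; ring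
    · norm_num
  -- integral decompositions
  have hd1 : (∫ u in Ioi (0:ℝ), F a x u)
      = (∫ u in (0:ℝ)..1, F a x u) + ∫ u in Ioi (1:ℝ), F a x u :=
    F_split ha ha1 hx0 le_rfl zero_le_one
  have hd2 : (∫ u in Ioi (1:ℝ), F a x u)
      = (∫ u in (1:ℝ)..(1 + (p:ℝ)), F a x u) + ∫ u in Ioi (1 + (p:ℝ)), F a x u :=
    F_split ha ha1 hx0 zero_le_one (by linarith [Nat.cast_nonneg (α := ℝ) p])
  have hmp : (1:ℝ) + (p:ℝ) = (m:ℝ) := by linarith [hpm]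
  have hd3 : (∫ u in Ioi ((m:ℝ)), F a x u)
      = (∫ u in (m:ℝ)..((m:ℝ) + 1), F a x u) + ∫ u in Ioi ((m:ℝ) + 1), F a x u :=
    F_split ha ha1 hx0 (by positivity) (by linarith)
  have hd4 : (∫ u in Ioi ((m:ℝ)), F a x u)
      = (∫ u in (m:ℝ)..((m:ℝ) + 2), F a x u) + ∫ u in Ioi ((m:ℝ) + 2), F a x u :=
    F_split ha ha1 hx0 (by positivity) (by linarith)
  rw [hmp] at hd2
  -- M bounds on small pieces
  have hm0 : (0:ℝ) < (m:ℝ) := by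
    have : (4:ℝ) ≤ (m:ℝ) := by exact_mod_cast hm4
    linarith
  have hI01 : (∫ u in (0:ℝ)..1, F a x u) ≤ M := by
    have h := step_upper (B := M) ha ha1 hx0 le_rfl zero_le_one ?_
    · simpa using h
    · intro u hu
      rcases hu.1.eq_or_lt with h0 | h0
      · rw [← h0, F_zero ha.le]; exact hM0
      · exact hMb u h0
  have hImm2 : (∫ u in (m:ℝ)..((m:ℝ) + 2), F a x u) ≤ 2 * M := by
    have h := step_upper (B := M) ha ha1 hx0 (c := (m:ℝ)) (d := (m:ℝ) + 2) (by positivity) (by linarith) ?_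
    · have e : ((m:ℝ) + 2) - (m:ℝ) = 2 := by ring
      rw [e] at h
      exact h
    · intro u hu
      exact hMb u (lt_of_lt_of_le hm0 hu.1)
  have hFm : F a x (m:ℝ) ≤ M := hMb _ hm0
  have hFm1 : F a x ((m:ℝ) + 1) ≤ M := hMb _ (by linarith)
  -- tsum split
  have hsplit := (Summable.sum_add_tsum_nat_add (f := fun k : ℕ => F a x ((k:ℝ) + 1)) (m + 1) hsum)
  have htail_eq : (∑' i : ℕ, F a x (((i + (m + 1) : ℕ):ℝ) + 1))
      = ∑' j : ℕ, F a x ((m:ℝ) + 2 + (j:ℝ)) := by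
    apply tsum_congr
    intro i
    congr 1
    push_cast
    ring
  rw [htail_eq] at hsplit
  -- assemble
  have hIval : (∫ u in Ioi (0:ℝ), F a x u) = x ^ (-a) * Real.Gamma a :=
    F_integral ha ha1 hx0
  have h1m_nn : (0:ℝ) ≤ ∫ u in (1:ℝ)..(1 + (p:ℝ)), F a x u :=
    hinn _ _ zero_le_one (by linarith [Nat.cast_nonneg (α := ℝ) p])
  rw [hmp] at up_fin low_fin h1m_nn
  have hmm1_nn : (0:ℝ) ≤ ∫ u in (m:ℝ)..((m:ℝ) + 1), F a x u := hinn _ _ (by positivity) (by linarith)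
  have h01_nn : (0:ℝ) ≤ ∫ u in (0:ℝ)..1, F a x u := hinn _ _ le_rfl zero_le_one
  have hIm1_nn : (0:ℝ) ≤ ∫ u in Ioi ((m:ℝ) + 1), F a x u := by
    apply setIntegral_nonneg measurableSet_Ioi
    intro u hu
    exact F_nonneg (le_of_lt (lt_of_le_of_lt (by positivity) hu))
  constructor
  · -- lower bound
    have hS1low : (∑ k ∈ Finset.range p, F a x ((k:ℝ) + 2))
        ≤ ∑ k ∈ Finset.range (m + 1), F a x ((k:ℝ) + 1) := by
      rw [hS1eq2]
      have h1 : (0:ℝ) ≤ F a x 1 := F_nonneg zero_le_one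
      have h2 : (0:ℝ) ≤ F a x ((m:ℝ) + 1) := F_nonneg (by linarith)
      linarith
    linarith [low_fin, tail_lb, hsplit, hd1, hd2, hd4, hI01, hImm2, hIval, hS1low]
  · -- upper bound
    linarith [up_fin, tail_ub, hsplit, hd1, hd2, hd3, hS1eq, h01_nn, hmm1_nn, hFm, hFm1, hIval]


lemma tendsto_xS {a : ℝ} (ha : 0 < a) (ha1 : a ≤ 1) :
    Tendsto (fun x : ℝ => x ^ a * ∑' k : ℕ, F a x ((k:ℝ) + 1)) atTop
      (nhds (Real.Gamma a)) := by
  have hdiv : Tendsto (fun x : ℝ => 81 / x) atTop (nhds 0) :=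
    tendsto_const_nhds.div_atTop tendsto_id
  have hlow : Tendsto (fun x : ℝ => Real.Gamma a - 81 / x) atTop (nhds (Real.Gamma a)) := by
    simpa using (tendsto_const_nhds (x := Real.Gamma a) (f := atTop (α := ℝ))).sub hdiv
  have hup : Tendsto (fun x : ℝ => Real.Gamma a + 81 / x) atTop (nhds (Real.Gamma a)) := by
    simpa using (tendsto_const_nhds (x := Real.Gamma a) (f := atTop (α := ℝ))).add hdiv
  apply tendsto_of_tendsto_of_tendsto_of_le_of_le' hlow hup
  · filter_upwards [eventually_ge_atTop (4 * (1 + a))] with x hx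
    obtain ⟨h1, _⟩ := sandwich ha ha1 hx
    have hx0 : (0:ℝ) < x := by nlinarith
    have e1 : x ^ a * x ^ (-a) = 1 := by
      rw [← Real.rpow_add hx0]
      simp
    have e2 : x ^ a * x ^ (-(1 + a)) = 1 / x := by
      rw [← Real.rpow_add hx0, show a + -(1 + a) = -1 by ring, Real.rpow_neg_one, one_div]
    have hxa : (0:ℝ) ≤ x ^ a := Real.rpow_nonneg hx0.le a
    have h3 := mul_le_mul_of_nonneg_left h1 hxa
    calc Real.Gamma a - 81 / x
        = (x ^ a * x ^ (-a)) * Real.Gamma a - 81 * (x ^ a * x ^ (-(1 + a))) := by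
          rw [e1, e2]; ring
      _ = x ^ a * (x ^ (-a) * Real.Gamma a - 3 * (27 * x ^ (-(1 + a)))) := by ring
      _ ≤ _ := h3
  · filter_upwards [eventually_ge_atTop (4 * (1 + a))] with x hx
    obtain ⟨_, h2⟩ := sandwich ha ha1 hx
    have hx0 : (0:ℝ) < x := by nlinarith
    have e1 : x ^ a * x ^ (-a) = 1 := by
      rw [← Real.rpow_add hx0]
      simp
    have e2 : x ^ a * x ^ (-(1 + a)) = 1 / x := by
      rw [← Real.rpow_add hx0, show a + -(1 + a) = -1 by ring, Real.rpow_neg_one, one_div]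
    have hxa : (0:ℝ) ≤ x ^ a := Real.rpow_nonneg hx0.le a
    have h3 := mul_le_mul_of_nonneg_left h2 hxa
    calc x ^ a * (∑' k : ℕ, F a x ((k:ℝ) + 1))
        ≤ x ^ a * (x ^ (-a) * Real.Gamma a + 2 * (27 * x ^ (-(1 + a)))) := h3
      _ = (x ^ a * x ^ (-a)) * Real.Gamma a + 54 * (x ^ a * x ^ (-(1 + a))) := by ring
      _ = Real.Gamma a + 54 / x := by rw [e1, e2]; ring
      _ ≤ Real.Gamma a + 81 / x := by
          have h54 : (54:ℝ) / x ≤ 81 / x := by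
            gcongr
            norm_num
          linarith

end OUproof

/-- `L(t) → C₂ Γ(2(1-H))` as `t → ∞`, a finite positive constant. -/
theorem stmt4 (H lam C2 : ℝ) (hH : H ∈ Set.Ioo (1 / 2 : ℝ) 1)
    (hlam : 0 < lam) (hC2 : 0 < C2) :
    Tendsto (fun t : ℝ => OUslow H lam C2 t) atTop
      (nhds (C2 * Real.Gamma (2 * (1 - H)))) ∧
    0 < C2 * Real.Gamma (2 * (1 - H)) := by
  obtain ⟨hH1, hH2⟩ := hH
  have ha : 0 < 2 * (1 - H) := by nlinarith
  have ha1 : 2 * (1 - H) ≤ 1 := by nlinarith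
  constructor
  · have key := OUproof.tendsto_xS ha ha1
    have hcomp : Tendsto (fun t : ℝ => lam * t) atTop atTop :=
      Tendsto.const_mul_atTop hlam tendsto_id
    have h2 := (key.comp hcomp).const_mul C2
    apply h2.congr'
    filter_upwards [eventually_gt_atTop (0:ℝ)] with t ht
    simp only [Function.comp, OUslow, OUsum, OUproof.F, if_neg ht.ne']
    ring
  · exact mul_pos hC2 (Real.Gamma_pos_of_pos ha)
end

section
/- As n → ∞ over the positive integers, n^{-2H} ∑_{j=1}^{n-1} (n-j) · L(j) · j^{-2(1-H)} → C₂ Γ(2(1-H)) / (2H(2H-1)). -/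
open Filter

open MeasureTheory Set Topology


namespace Stmt9Aux

noncomputable def f0 (α u : ℝ) : ℝ := u ^ (1 + α) * Real.exp (-u)

lemma f0_nonneg (α : ℝ) {u : ℝ} (hu : 0 ≤ u) : 0 ≤ f0 α u :=
  mul_nonneg (Real.rpow_nonneg hu _) (Real.exp_pos _).le

lemma f0_le (α : ℝ) (hα0 : 0 ≤ α) (hα1 : α ≤ 1) {u : ℝ} (hu : 0 ≤ u) : f0 α u ≤ 27 := by
  rcases le_or_gt u 1 with h1 | h1
  · have h2 : u ^ (1 + α) ≤ 1 := Real.rpow_le_one hu h1 (by linarith)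
    have he : Real.exp (-u) ≤ 1 := Real.exp_le_one_iff.mpr (by linarith)
    calc f0 α u ≤ 1 * 1 := mul_le_mul h2 he (Real.exp_pos _).le zero_le_one
    _ ≤ 27 := by norm_num
  · have hu3 : u ^ (3:ℕ) ≤ 27 * Real.exp u := by
      have h3 : Real.exp u = (Real.exp (u / 3)) ^ (3:ℕ) := by
        rw [← Real.exp_nat_mul]; ring_nf
      have hb : u / 3 ≤ Real.exp (u / 3) := by
        have := Real.add_one_le_exp (u / 3); linarith
      have hp : (u / 3) ^ (3:ℕ) ≤ (Real.exp (u / 3)) ^ (3:ℕ) :=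
        pow_le_pow_left₀ (by positivity) hb 3
      calc u ^ (3:ℕ) = 27 * (u / 3) ^ (3:ℕ) := by ring
      _ ≤ 27 * (Real.exp (u / 3)) ^ (3:ℕ) := by linarith
      _ = 27 * Real.exp u := by rw [h3]
    have key : u ^ (2:ℝ) ≤ 27 * Real.exp u := by
      have e2 : u ^ (2:ℝ) = u ^ (2:ℕ) := by
        rw [← Real.rpow_natCast u 2]; norm_num
      have h23 : u ^ (2:ℕ) ≤ u ^ (3:ℕ) := pow_le_pow_right₀ h1.le (by norm_num)
      rw [e2]; linarith
    have hr2 : u ^ (1 + α) ≤ u ^ (2:ℝ) :=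
      Real.rpow_le_rpow_of_exponent_le h1.le (by linarith)
    calc f0 α u ≤ u ^ (2:ℝ) * Real.exp (-u) :=
          mul_le_mul_of_nonneg_right hr2 (Real.exp_pos _).le
    _ ≤ (27 * Real.exp u) * Real.exp (-u) :=
          mul_le_mul_of_nonneg_right key (Real.exp_pos _).le
    _ = 27 := by rw [mul_assoc, ← Real.exp_add]; simp

noncomputable def gbound (α y : ℝ) : ℝ := if y ≤ 1 then 27 else y ^ (-(1 + α))

lemma gbound_integrable {α : ℝ} (hα : 0 < α) : IntegrableOn (gbound α) (Ioi (0:ℝ)) := by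
  have hsplit : Ioi (0:ℝ) = Ioc 0 1 ∪ Ioi 1 := by
    rw [Ioc_union_Ioi_eq_Ioi]; norm_num
  rw [hsplit]
  apply IntegrableOn.union
  · apply IntegrableOn.congr_fun (f := fun _ => (27:ℝ))
    · simp [integrableOn_const]
    · intro y hy; simp [gbound, hy.2]
    · exact measurableSet_Ioc
  · apply IntegrableOn.congr_fun (f := fun y => y ^ (-(1 + α)))
    · exact integrableOn_Ioi_rpow_of_lt (by linarith) one_pos
    · intro y hy; simp only [gbound, if_neg (not_le.mpr (show (1:ℝ) < y from hy))]
    · exact measurableSet_Ioi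

lemma gamma_repr {α : ℝ} (hα : 0 < α) :
    ∫ y in Ioi (0:ℝ), f0 α (1 / y) = Real.Gamma α := by
  have key := MeasureTheory.integral_comp_rpow_Ioi
    (fun u => Real.exp (-u) * u ^ (α - 1)) (p := (-1:ℝ)) (by norm_num)
  rw [Real.Gamma_eq_integral hα, ← key]
  apply setIntegral_congr_fun measurableSet_Ioi
  intro x hx
  have hx0 : (0:ℝ) < x := hx
  have h1 : x ^ ((-1:ℝ)) = x⁻¹ := by
    rw [Real.rpow_neg hx0.le, Real.rpow_one]
  have h2 : (x⁻¹) ^ (α - 1) = x ^ (-(α - 1)) := by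
    rw [Real.inv_rpow hx0.le, ← Real.rpow_neg hx0.le]
  simp only [smul_eq_mul]
  rw [h1, h2]
  show (1 / x) ^ (1 + α) * Real.exp (-(1 / x)) = _
  rw [one_div, Real.inv_rpow hx0.le, ← Real.rpow_neg hx0.le,
    show (-(1+α)) = ((-1:ℝ)-1) + (-(α-1)) by ring, Real.rpow_add hx0]
  simp only [abs_neg, abs_one, one_mul]
  ring

end Stmt9Aux

namespace Stmt9Aux2
open Stmt9Aux

lemma F_meas (α c : ℝ) : Measurable (fun y : ℝ => f0 α (c / (⌈c * y⌉₊ : ℝ))) := by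
  have h1 : Measurable (fun y : ℝ => ⌈c * y⌉₊) :=
    Nat.measurable_ceil.comp (measurable_id.const_mul c)
  exact (Measurable.of_discrete (f := fun K : ℕ => f0 α (c / (K:ℝ)))).comp h1

lemma F_le_gbound {α : ℝ} (hα0 : 0 < α) (hα1 : α ≤ 1) {c y : ℝ} (hc : 0 < c) (hy : 0 < y) :
    f0 α (c / (⌈c * y⌉₊ : ℝ)) ≤ gbound α y := by
  have hcy : 0 < c * y := mul_pos hc hy
  have hK : 0 < ⌈c * y⌉₊ := Nat.ceil_pos.mpr hcy
  have hKR : (0:ℝ) < (⌈c * y⌉₊ : ℝ) := by exact_mod_cast hK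
  have hle : c * y ≤ (⌈c * y⌉₊ : ℝ) := Nat.le_ceil _
  have hu0 : 0 ≤ c / (⌈c * y⌉₊ : ℝ) := by positivity
  have hu : c / (⌈c * y⌉₊ : ℝ) ≤ 1 / y := by
    rw [div_le_div_iff₀ hKR hy]; nlinarith
  by_cases h1 : y ≤ 1
  · rw [gbound, if_pos h1]; exact f0_le α hα0.le hα1 hu0
  · rw [gbound, if_neg h1]
    push_neg at h1
    have e1 : (1 / y) ^ (1 + α) = y ^ (-(1 + α)) := by
      rw [one_div, Real.inv_rpow hy.le, ← Real.rpow_neg hy.le]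
    calc f0 α (c / (⌈c * y⌉₊ : ℝ))
        ≤ (c / (⌈c * y⌉₊ : ℝ)) ^ (1 + α) * 1 := by
          apply mul_le_mul_of_nonneg_left _ (Real.rpow_nonneg hu0 _)
          exact Real.exp_le_one_iff.mpr (by linarith [hu0])
      _ = (c / (⌈c * y⌉₊ : ℝ)) ^ (1 + α) := mul_one _
      _ ≤ (1 / y) ^ (1 + α) := Real.rpow_le_rpow hu0 hu (by linarith)
      _ = y ^ (-(1 + α)) := e1

lemma repr {α : ℝ} (hα0 : 0 < α) {c : ℝ} (hc : 0 < c)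
    (hint : IntegrableOn (fun y : ℝ => f0 α (c / (⌈c * y⌉₊ : ℝ))) (Ioi (0:ℝ))) :
    c ^ α * (∑' k : ℕ, ((k:ℝ)+1) ^ (-(1+α)) * Real.exp (-c / ((k:ℝ)+1)))
      = ∫ y in Ioi (0:ℝ), f0 α (c / (⌈c * y⌉₊ : ℝ)) := by
  set S : ℕ → Set ℝ := fun k => Ioc ((k:ℝ)/c) (((k:ℝ)+1)/c) with hS
  have hmeas : ∀ k, MeasurableSet (S k) := fun k => measurableSet_Ioc
  have hdisj : Pairwise (Function.onFun Disjoint S) := by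
    apply (pairwise_disjoint_on S).mpr
    intro m n hmn
    apply Set.disjoint_left.mpr
    intro x hxm hxn
    have h1 : x ≤ ((m:ℝ)+1)/c := hxm.2
    have h2 : ((n:ℝ))/c < x := hxn.1
    have : ((m:ℝ)+1) ≤ (n:ℝ) := by exact_mod_cast hmn
    have : ((m:ℝ)+1)/c ≤ (n:ℝ)/c := by gcongr
    linarith
  have hunion : (⋃ k, S k) = Ioi (0:ℝ) := by
    ext y
    simp only [mem_iUnion, mem_Ioc, mem_Ioi, hS]
    constructor
    · rintro ⟨k, hk1, -⟩
      have : (0:ℝ) ≤ (k:ℝ)/c := by positivity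
      linarith
    · intro hy
      have hcy : 0 < c * y := mul_pos hc hy
      have hK : 0 < ⌈c * y⌉₊ := Nat.ceil_pos.mpr hcy
      refine ⟨⌈c * y⌉₊ - 1, ?_, ?_⟩
      · rw [div_lt_iff₀ hc]
        have h2 : ((⌈c * y⌉₊ : ℝ)) < c * y + 1 := Nat.ceil_lt_add_one hcy.le
        have h3 : ((⌈c * y⌉₊ - 1 : ℕ) : ℝ) = (⌈c * y⌉₊ : ℝ) - 1 := by
          push_cast [hK]; ring
        rw [h3]; nlinarith [mul_comm c y]
      · rw [le_div_iff₀ hc]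
        have h3 : ((⌈c * y⌉₊ - 1 : ℕ) : ℝ) = (⌈c * y⌉₊ : ℝ) - 1 := by
          push_cast [hK]; ring
        rw [h3]
        have := Nat.le_ceil (c * y)
        nlinarith [mul_comm c y]
  have hterm : ∀ k : ℕ, c ^ α * (((k:ℝ)+1) ^ (-(1+α)) * Real.exp (-c / ((k:ℝ)+1)))
      = ∫ y in S k, f0 α (c / (⌈c * y⌉₊ : ℝ)) := by
    intro k
    have hkp : (0:ℝ) < (k:ℝ) + 1 := by positivity
    have hconst : EqOn (fun y : ℝ => f0 α (c / (⌈c * y⌉₊ : ℝ)))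
        (fun _ : ℝ => f0 α (c / ((k:ℝ)+1))) (S k) := by
      intro y hy
      have hy1 : (k:ℝ)/c < y := hy.1
      have hy2 : y ≤ ((k:ℝ)+1)/c := hy.2
      have hceil : ⌈c * y⌉₊ = k + 1 := by
        rw [Nat.ceil_eq_iff (Nat.succ_ne_zero k)]
        constructor
        · rw [div_lt_iff₀ hc] at hy1; push_cast [Nat.add_sub_cancel]
          nlinarith [mul_comm c y]
        · rw [le_div_iff₀ hc] at hy2; push_cast; nlinarith [mul_comm c y]
      simp only [hceil]
      push_cast
      rfl
    rw [setIntegral_congr_fun (hmeas k) hconst, setIntegral_const,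
      Real.volume_real_Ioc_of_le (a := (k:ℝ)/c) (b := ((k:ℝ)+1)/c) (by gcongr <;> linarith)]
    have hvol : ((k:ℝ)+1)/c - (k:ℝ)/c = 1/c := by ring
    rw [hvol, smul_eq_mul]
    show _ = 1/c * ((c / ((k:ℝ)+1)) ^ (1+α) * Real.exp (-(c / ((k:ℝ)+1))))
    rw [Real.div_rpow hc.le hkp.le, Real.rpow_add hc, Real.rpow_one,
      Real.rpow_neg hkp.le, neg_div]
    field_simp
  have hint' : IntegrableOn (fun y : ℝ => f0 α (c / (⌈c * y⌉₊ : ℝ))) (⋃ k, S k) := by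
    rw [hunion]; exact hint
  calc c ^ α * (∑' k : ℕ, ((k:ℝ)+1) ^ (-(1+α)) * Real.exp (-c / ((k:ℝ)+1)))
      = ∑' k : ℕ, c ^ α * (((k:ℝ)+1) ^ (-(1+α)) * Real.exp (-c / ((k:ℝ)+1))) := by
        rw [← tsum_mul_left]
    _ = ∑' k : ℕ, ∫ y in S k, f0 α (c / (⌈c * y⌉₊ : ℝ)) := tsum_congr hterm
    _ = ∫ y in ⋃ k, S k, f0 α (c / (⌈c * y⌉₊ : ℝ)) :=
        (integral_iUnion hmeas hdisj hint').symm
    _ = ∫ y in Ioi (0:ℝ), f0 α (c / (⌈c * y⌉₊ : ℝ)) := by rw [hunion]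

lemma F_integrable {α : ℝ} (hα0 : 0 < α) (hα1 : α ≤ 1) {c : ℝ} (hc : 0 < c) :
    IntegrableOn (fun y : ℝ => f0 α (c / (⌈c * y⌉₊ : ℝ))) (Ioi (0:ℝ)) := by
  apply Integrable.mono' (gbound_integrable hα0)
    ((F_meas α c).aestronglyMeasurable.restrict)
  rw [ae_restrict_iff' measurableSet_Ioi]
  refine ae_of_all _ (fun y hy => ?_)
  have hy0 : (0:ℝ) < y := hy
  rw [Real.norm_eq_abs, abs_of_nonneg (f0_nonneg α (by positivity))]
  exact F_le_gbound hα0 hα1 hc hy0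

lemma tendsto_a {α : ℝ} (hα0 : 0 < α) (hα1 : α ≤ 1) {lam : ℝ} (hlam : 0 < lam) :
    Tendsto (fun j : ℕ => (lam * (j:ℝ)) ^ α *
        (∑' k : ℕ, ((k:ℝ)+1) ^ (-(1+α)) * Real.exp (-(lam * (j:ℝ)) / ((k:ℝ)+1))))
      atTop (𝓝 (Real.Gamma α)) := by
  have hctop : Tendsto (fun j : ℕ => lam * (j:ℝ)) atTop atTop :=
    (tendsto_natCast_atTop_atTop (R := ℝ)).const_mul_atTop hlam
  have hmain : Tendsto (fun j : ℕ => ∫ y in Ioi (0:ℝ),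
      f0 α ((lam * (j:ℝ)) / (⌈(lam * (j:ℝ)) * y⌉₊ : ℝ))) atTop (𝓝 (Real.Gamma α)) := by
    rw [← gamma_repr hα0]
    refine MeasureTheory.tendsto_integral_filter_of_dominated_convergence (μ := volume.restrict (Ioi (0:ℝ))) (gbound α) ?_ ?_ ?_ ?_
    · exact Eventually.of_forall
        (fun j => (F_meas α (lam * (j:ℝ))).aestronglyMeasurable.restrict)
    · have : ∀ᶠ j : ℕ in atTop, 0 < lam * (j:ℝ) := by
        filter_upwards [eventually_ge_atTop 1] with j hj
        have : (1:ℝ) ≤ (j:ℝ) := by exact_mod_cast hj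
        nlinarith
      filter_upwards [this] with j hj
      rw [ae_restrict_iff' measurableSet_Ioi]
      refine ae_of_all _ (fun y hy => ?_)
      have hy0 : (0:ℝ) < y := hy
      rw [Real.norm_eq_abs, abs_of_nonneg (f0_nonneg α (by positivity))]
      exact F_le_gbound hα0 hα1 hj hy0
    · exact gbound_integrable hα0
    · rw [ae_restrict_iff' measurableSet_Ioi]
      refine ae_of_all _ (fun y hy => ?_)
      have hy0 : (0:ℝ) < y := hy
      -- show Tendsto (fun j => f0 α (c_j / ⌈c_j y⌉₊)) atTop (𝓝 (f0 α (1/y)))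
      have hcont : ContinuousAt (f0 α) (1 / y) := by
        apply ContinuousAt.mul
        · exact Real.continuousAt_rpow_const _ _ (Or.inl (by positivity))
        · exact (Real.continuous_exp.comp continuous_neg).continuousAt
      have hratio : Tendsto (fun j : ℕ =>
          (lam * (j:ℝ)) / (⌈(lam * (j:ℝ)) * y⌉₊ : ℝ)) atTop (𝓝 (1 / y)) := by
        have hKc : Tendsto (fun j : ℕ =>
            ((⌈(lam * (j:ℝ)) * y⌉₊ : ℝ)) / (lam * (j:ℝ))) atTop (𝓝 y) := by
          apply tendsto_of_tendsto_of_tendsto_of_le_of_le' (g := fun _ : ℕ => y)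
            (h := fun j : ℕ => y + (lam * (j:ℝ))⁻¹) tendsto_const_nhds
            (by simpa using (tendsto_const_nhds (x := y)).add hctop.inv_tendsto_atTop)
          · filter_upwards [hctop.eventually_ge_atTop 1] with j hj
            have hc : (0:ℝ) < lam * (j:ℝ) := by linarith
            rw [le_div_iff₀ hc]
            have := Nat.le_ceil ((lam * (j:ℝ)) * y)
            nlinarith
          · filter_upwards [hctop.eventually_ge_atTop 1] with j hj
            have hc : (0:ℝ) < lam * (j:ℝ) := by linarith
            rw [div_le_iff₀ hc]
            have h2 := Nat.ceil_lt_add_one (a := (lam * (j:ℝ)) * y) (by positivity)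
            have : (lam * (j:ℝ)) * (lam * (j:ℝ))⁻¹ = 1 := mul_inv_cancel₀ (by linarith)
            nlinarith
        have hinv : Tendsto (fun j : ℕ =>
            (((⌈(lam * (j:ℝ)) * y⌉₊ : ℝ)) / (lam * (j:ℝ)))⁻¹) atTop (𝓝 y⁻¹) :=
          hKc.inv₀ (ne_of_gt hy0)
        rw [one_div]
        apply hinv.congr'
        filter_upwards [hctop.eventually_ge_atTop 1] with j hj
        rw [inv_div]
      exact (hcont.tendsto.comp hratio)
  apply hmain.congr'
  filter_upwards [hctop.eventually_ge_atTop 1] with j hj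
  have hc : (0:ℝ) < lam * (j:ℝ) := by linarith
  exact (repr hα0 hc (F_integrable hα0 hα1 hc)).symm

end Stmt9Aux2


namespace Stmt9Aux3

noncomputable def hfun (α x : ℝ) : ℝ := (1 - x) * x ^ (-α)

variable {α : ℝ}

lemma hfun_nonneg {x : ℝ} (hx : 0 ≤ x) (hx1 : x ≤ 1) : 0 ≤ hfun α x :=
  mul_nonneg (by linarith) (Real.rpow_nonneg hx _)

lemma hfun_anti (hα0 : 0 < α) {x y : ℝ} (hx : 0 < x) (hxy : x ≤ y) (hy1 : y ≤ 1) :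
    hfun α y ≤ hfun α x := by
  have hy0 : 0 < y := lt_of_lt_of_le hx hxy
  have h1 : y ^ (-α) ≤ x ^ (-α) := by
    rw [Real.rpow_neg hy0.le, Real.rpow_neg hx.le]
    exact inv_anti₀ (Real.rpow_pos_of_pos hx α)
      (Real.rpow_le_rpow hx.le hxy hα0.le)
  exact mul_le_mul (by linarith) h1 (Real.rpow_nonneg hy0.le _) (by linarith)

lemma hfun_intble (hα1 : α < 1) (a b : ℝ) : IntervalIntegrable (hfun α) volume a b := by
  have h1 : IntervalIntegrable (fun x : ℝ => x ^ (-α)) volume a b :=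
    intervalIntegral.intervalIntegrable_rpow' (by linarith)
  have h2 : ContinuousOn (fun x : ℝ => 1 - x) (Set.uIcc a b) :=
    (continuous_const.sub continuous_id).continuousOn
  exact h1.continuousOn_mul h2

lemma int_lb (hα0 : 0 < α) (hα1 : α < 1) {a b : ℝ} (h0 : 0 ≤ a) (hab : a ≤ b) (hb : b ≤ 1) :
    hfun α b * (b - a) ≤ ∫ y in a..b, hfun α y := by
  rw [intervalIntegral.integral_of_le hab]
  have hI : IntegrableOn (hfun α) (Ioc a b) volume := (hfun_intble hα1 a b).1
  have := setIntegral_mono_on (f := fun _ => hfun α b) (g := hfun α)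
    (s := Ioc a b) (μ := volume)
    (integrableOn_const measure_Ioc_lt_top.ne) hI measurableSet_Ioc
    (fun x hx => hfun_anti hα0 (lt_of_le_of_lt h0 hx.1) hx.2 hb)
  simpa [setIntegral_const, Real.volume_Ioc,
    max_eq_left (sub_nonneg.mpr hab), smul_eq_mul, mul_comm] using this

lemma int_ub (hα0 : 0 < α) (hα1 : α < 1) {a b : ℝ} (h0 : 0 < a) (hab : a ≤ b) (hb : b ≤ 1) :
    ∫ y in a..b, hfun α y ≤ hfun α a * (b - a) := by
  rw [intervalIntegral.integral_of_le hab]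
  have hI : IntegrableOn (hfun α) (Ioc a b) volume := (hfun_intble hα1 a b).1
  have := setIntegral_mono_on (f := hfun α) (g := fun _ => hfun α a)
    (s := Ioc a b) (μ := volume)
    hI (integrableOn_const measure_Ioc_lt_top.ne) measurableSet_Ioc
    (fun x hx => hfun_anti hα0 h0 hx.1.le (le_trans hx.2 hb))
  simpa [setIntegral_const, Real.volume_Ioc,
    max_eq_left (sub_nonneg.mpr hab), smul_eq_mul, mul_comm] using this

lemma Wval (hα0 : 0 < α) (hα1 : α < 1) :
    ∫ y in (0:ℝ)..1, hfun α y = 1/(1-α) - 1/(2-α) := by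
  have hcongr : EqOn (hfun α) (fun x : ℝ => x ^ (-α) - x ^ (-α + 1)) (Set.uIcc (0:ℝ) 1) := by
    intro x hx
    rw [uIcc_of_le zero_le_one] at hx
    rcases eq_or_lt_of_le hx.1 with h | h
    · simp only [hfun, ← h, Real.zero_rpow (by linarith : -α ≠ 0),
        Real.zero_rpow (by linarith : -α + 1 ≠ 0)]
      ring
    · simp only [hfun, Real.rpow_add h, Real.rpow_one]
      ring
  rw [intervalIntegral.integral_congr hcongr,
    intervalIntegral.integral_sub
      (intervalIntegral.intervalIntegrable_rpow' (by linarith))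
      (intervalIntegral.intervalIntegrable_rpow' (by linarith)),
    integral_rpow (Or.inl (by linarith)), integral_rpow (Or.inl (by linarith)),
    Real.one_rpow, Real.one_rpow,
    Real.zero_rpow (by linarith : -α + 1 ≠ 0),
    Real.zero_rpow (by linarith : -α + 1 + 1 ≠ 0)]
  rw [show -α + 1 = 1 - α from by ring, show (1:ℝ) - α + 1 = 2 - α from by ring]
  norm_num

noncomputable def wf (α : ℝ) (n j : ℕ) : ℝ :=
  (n:ℝ) ^ (α - 2) * ((n - j : ℕ) : ℝ) * (j:ℝ) ^ (-α)

lemma wf_nonneg (α : ℝ) (n j : ℕ) : 0 ≤ wf α n j :=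
  mul_nonneg (mul_nonneg (Real.rpow_nonneg (Nat.cast_nonneg n) _)
    (Nat.cast_nonneg _)) (Real.rpow_nonneg (Nat.cast_nonneg j) _)

lemma w_eq (n j : ℕ) (h1 : 1 ≤ j) (h2 : j ≤ n - 1) (hn : 2 ≤ n) :
    wf α n j = hfun α ((j:ℝ)/(n:ℝ)) * (1/(n:ℝ)) := by
  have hn0 : (0:ℝ) < (n:ℝ) := by exact_mod_cast (by omega : 0 < n)
  have hj0 : (0:ℝ) < (j:ℝ) := by exact_mod_cast h1
  have hjn : j ≤ n := le_trans h2 (Nat.sub_le n 1)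
  have hcast : ((n - j : ℕ) : ℝ) = (n:ℝ) - (j:ℝ) := by
    push_cast [hjn]; ring
  have hdiv : ((j:ℝ)/(n:ℝ)) ^ (-α) = (j:ℝ) ^ (-α) * (n:ℝ) ^ α := by
    rw [Real.div_rpow hj0.le hn0.le, Real.rpow_neg hn0.le]
    rw [div_eq_mul_inv, inv_inv]
  have e : (n:ℝ) ^ (α - 2) * (n:ℝ) * (n:ℝ) = (n:ℝ) ^ α := by
    have := Real.rpow_add hn0 (α - 2) 1
    have h2 := Real.rpow_add hn0 (α - 1) 1
    rw [Real.rpow_one] at this h2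
    have e1 : α - 2 + 1 = α - 1 := by ring
    have e2 : α - 1 + 1 = α := by ring
    rw [e1] at this; rw [e2] at h2
    rw [h2, this]
  rw [wf, hcast, hfun, hdiv]
  field_simp
  linear_combination ((n:ℝ) - (j:ℝ)) * e

lemma Wn_le (hα0 : 0 < α) (hα1 : α < 1) (n : ℕ) (hn : 2 ≤ n) :
    ∑ j ∈ Finset.Icc 1 (n-1), wf α n j ≤ ∫ y in (0:ℝ)..1, hfun α y := by
  have hn0 : (0:ℝ) < (n:ℝ) := by exact_mod_cast (by omega : 0 < n)
  have hsum : ∑ j ∈ Finset.Icc 1 (n-1), wf α n j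
      = ∑ k ∈ Finset.range (n-1), wf α n (1+k) := by
    rw [show Finset.Icc 1 (n-1) = Finset.Ico 1 n by rw [← Finset.Ico_add_one_right_eq_Icc]; congr 1; omega,
      Finset.sum_Ico_eq_sum_range]
  set a : ℕ → ℝ := fun k => (k:ℝ)/(n:ℝ) with ha
  have hadj : ∑ k ∈ Finset.range (n-1), ∫ y in a k..a (k+1), hfun α y
      = ∫ y in (a 0)..(a (n-1)), hfun α y :=
    intervalIntegral.sum_integral_adjacent_intervals (fun k _ => hfun_intble hα1 _ _)
  have hstep : ∀ k ∈ Finset.range (n-1), wf α n (1+k) ≤ ∫ y in a k..a (k+1), hfun α y := by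
    intro k hk
    have hkn : k < n - 1 := Finset.mem_range.mp hk
    have hak1 : a (k+1) = ((k:ℝ)+1)/(n:ℝ) := by simp only [ha]; push_cast; ring
    have hble : a (k+1) ≤ 1 := by
      rw [hak1, div_le_one hn0]
      have : (k:ℝ) + 1 ≤ (n:ℝ) := by exact_mod_cast (by omega : k + 1 ≤ n)
      linarith
    have h0a : 0 ≤ a k := by simp only [ha]; positivity
    have haab : a k ≤ a (k+1) := by
      rw [hak1]; simp only [ha]; gcongr; linarith
    have hlb := int_lb hα0 hα1 h0a haab hble
    have hβ : a (k+1) - a k = 1/(n:ℝ) := by rw [hak1]; simp only [ha]; ring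
    rw [hβ] at hlb
    rw [w_eq n (1+k) (by omega) (by omega) hn]
    have h1k : ((1+k:ℕ):ℝ) = (k:ℝ)+1 := by push_cast; ring
    rw [h1k, ← hak1]
    exact hlb
  have h0 : a 0 = 0 := by simp [ha]
  have hfin : ∫ y in (a 0)..(a (n-1)), hfun α y ≤ ∫ y in (0:ℝ)..1, hfun α y := by
    rw [h0]
    have hsplit := intervalIntegral.integral_add_adjacent_intervals
      (a := (0:ℝ)) (b := a (n-1)) (c := 1) (μ := volume)
      (hfun_intble hα1 _ _) (hfun_intble hα1 _ _)
    have han1 : a (n-1) ≤ 1 := by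
      simp only [ha]; rw [div_le_one hn0]
      exact_mod_cast Nat.sub_le n 1
    have h0an : 0 ≤ a (n-1) := by simp only [ha]; positivity
    have hpos : 0 ≤ ∫ y in (a (n-1))..1, hfun α y := by
      apply intervalIntegral.integral_nonneg han1
      exact fun u hu => hfun_nonneg (le_trans h0an hu.1) hu.2
    linarith
  calc ∑ j ∈ Finset.Icc 1 (n-1), wf α n j
      = ∑ k ∈ Finset.range (n-1), wf α n (1+k) := hsum
    _ ≤ ∑ k ∈ Finset.range (n-1), ∫ y in a k..a (k+1), hfun α y :=
        Finset.sum_le_sum hstep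
    _ = ∫ y in (a 0)..(a (n-1)), hfun α y := hadj
    _ ≤ _ := hfin

lemma Wn_ge (hα0 : 0 < α) (hα1 : α < 1) (n : ℕ) (hn : 2 ≤ n) :
    ∫ y in (1/(n:ℝ))..1, hfun α y ≤ ∑ j ∈ Finset.Icc 1 (n-1), wf α n j := by
  have hn0 : (0:ℝ) < (n:ℝ) := by exact_mod_cast (by omega : 0 < n)
  have hsum : ∑ j ∈ Finset.Icc 1 (n-1), wf α n j
      = ∑ k ∈ Finset.range (n-1), wf α n (1+k) := by
    rw [show Finset.Icc 1 (n-1) = Finset.Ico 1 n by rw [← Finset.Ico_add_one_right_eq_Icc]; congr 1; omega,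
      Finset.sum_Ico_eq_sum_range]
  set a : ℕ → ℝ := fun k => ((k:ℝ)+1)/(n:ℝ) with ha
  have hadj : ∑ k ∈ Finset.range (n-1), ∫ y in a k..a (k+1), hfun α y
      = ∫ y in (a 0)..(a (n-1)), hfun α y :=
    intervalIntegral.sum_integral_adjacent_intervals (fun k _ => hfun_intble hα1 _ _)
  have hstep : ∀ k ∈ Finset.range (n-1), ∫ y in a k..a (k+1), hfun α y ≤ wf α n (1+k) := by
    intro k hk
    have hkn : k < n - 1 := Finset.mem_range.mp hk
    have hak1 : a (k+1) = ((k:ℝ)+2)/(n:ℝ) := by simp only [ha]; push_cast; ring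
    have hble : a (k+1) ≤ 1 := by
      rw [hak1, div_le_one hn0]
      have : (k:ℝ) + 2 ≤ (n:ℝ) := by exact_mod_cast (by omega : k + 2 ≤ n)
      linarith
    have h0a : 0 < a k := by simp only [ha]; positivity
    have haab : a k ≤ a (k+1) := by
      rw [hak1]; simp only [ha]; gcongr; linarith
    have hub := int_ub hα0 hα1 h0a haab hble
    have hβ : a (k+1) - a k = 1/(n:ℝ) := by rw [hak1]; simp only [ha]; ring
    rw [hβ] at hub
    rw [w_eq n (1+k) (by omega) (by omega) hn]
    have h1k : ((1+k:ℕ):ℝ) = (k:ℝ)+1 := by push_cast; ring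
    rw [h1k]
    show ∫ y in (a k)..(a (k+1)), hfun α y ≤ hfun α (a k) * (1/(n:ℝ))
    exact hub
  have h0 : a 0 = 1/(n:ℝ) := by simp [ha]
  have hend : a (n-1) = 1 := by
    simp only [ha]
    rw [div_eq_one_iff_eq (ne_of_gt hn0)]
    have : ((n-1:ℕ):ℝ) = (n:ℝ) - 1 := by
      push_cast [(by omega : 1 ≤ n)]; ring
    rw [this]; ring
  calc ∫ y in (1/(n:ℝ))..1, hfun α y
      = ∫ y in (a 0)..(a (n-1)), hfun α y := by rw [h0, hend]
    _ = ∑ k ∈ Finset.range (n-1), ∫ y in a k..a (k+1), hfun α y := hadj.symm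
    _ ≤ ∑ k ∈ Finset.range (n-1), wf α n (1+k) := Finset.sum_le_sum hstep
    _ = ∑ j ∈ Finset.Icc 1 (n-1), wf α n j := hsum.symm

lemma Wn_tendsto (hα0 : 0 < α) (hα1 : α < 1) :
    Tendsto (fun n : ℕ => ∑ j ∈ Finset.Icc 1 (n-1), wf α n j) atTop
      (𝓝 (1/(1-α) - 1/(2-α))) := by
  rw [← Wval hα0 hα1]
  have hzero : Tendsto (fun n : ℕ => ∫ y in (0:ℝ)..(1/(n:ℝ)), hfun α y) atTop (𝓝 0) := by
    apply squeeze_zero' (g := fun n : ℕ => (1/(n:ℝ)) ^ (-α+1) / (-α+1))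
    · filter_upwards [eventually_ge_atTop 1] with n hn
      have h1n : 1/(n:ℝ) ≤ 1 := by
        apply div_le_one_of_le₀
        · exact_mod_cast hn
        · positivity
      apply intervalIntegral.integral_nonneg (by positivity)
      exact fun u hu => hfun_nonneg hu.1 (le_trans hu.2 h1n)
    · filter_upwards [eventually_ge_atTop 1] with n hn
      have h1n : 1/(n:ℝ) ≤ 1 := by
        apply div_le_one_of_le₀
        · exact_mod_cast hn
        · positivity
      have hmono : ∫ y in (0:ℝ)..(1/(n:ℝ)), hfun α y
          ≤ ∫ y in (0:ℝ)..(1/(n:ℝ)), y ^ (-α) := by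
        apply intervalIntegral.integral_mono_on (by positivity)
          (hfun_intble hα1 _ _)
          (intervalIntegral.intervalIntegrable_rpow' (by linarith))
        intro x hx
        calc hfun α x ≤ 1 * x ^ (-α) :=
          mul_le_mul_of_nonneg_right (by linarith [hx.1]) (Real.rpow_nonneg hx.1 _)
        _ = x ^ (-α) := one_mul _
      rw [integral_rpow (Or.inl (by linarith)),
        Real.zero_rpow (by linarith : -α+1 ≠ 0)] at hmono
      simpa using hmono
    · have h1 : Tendsto (fun n : ℕ => 1/(n:ℝ)) atTop (𝓝 0) :=
        tendsto_one_div_atTop_nhds_zero_nat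
      have h2 : ContinuousAt (fun x : ℝ => x ^ (-α+1)) 0 :=
        Real.continuousAt_rpow_const 0 _ (Or.inr (by linarith))
      have h3 := (h2.tendsto.comp h1).div_const (-α+1)
      rw [Real.zero_rpow (by linarith : -α+1 ≠ 0), zero_div] at h3
      exact h3
  have hlow : Tendsto (fun n : ℕ => ∫ y in (1/(n:ℝ))..1, hfun α y) atTop
      (𝓝 (∫ y in (0:ℝ)..1, hfun α y)) := by
    have h4 := tendsto_const_nhds (x := ∫ y in (0:ℝ)..1, hfun α y) (f := atTop (α := ℕ))
    have h5 := h4.sub hzero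
    rw [sub_zero] at h5
    apply h5.congr
    intro n
    have hsplit := intervalIntegral.integral_add_adjacent_intervals
      (a := (0:ℝ)) (b := 1/(n:ℝ)) (c := 1) (μ := volume)
      (hfun_intble hα1 _ _) (hfun_intble hα1 _ _)
    linarith
  apply tendsto_of_tendsto_of_tendsto_of_le_of_le' hlow tendsto_const_nhds
  · filter_upwards [eventually_ge_atTop 2] with n hn
    exact Wn_ge hα0 hα1 n hn
  · filter_upwards [eventually_ge_atTop 2] with n hn
    exact Wn_le hα0 hα1 n hn

end Stmt9Aux3

namespace Stmt9Aux4

lemma toeplitz {w : ℕ → ℕ → ℝ} {d : ℕ → ℝ} {B : ℝ}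
    (hw : ∀ n j, 0 ≤ w n j) (hd0 : ∀ j, 0 ≤ d j)
    (hd : Tendsto d atTop (𝓝 0))
    (hB : ∀ n, ∑ j ∈ Finset.Icc 1 (n-1), w n j ≤ B)
    (hcol : ∀ j, Tendsto (fun n => w n j) atTop (𝓝 0)) :
    Tendsto (fun n => ∑ j ∈ Finset.Icc 1 (n-1), w n j * d j) atTop (𝓝 0) := by
  have hB0 : 0 ≤ B := le_trans (by simp) (hB 0)
  rw [Metric.tendsto_atTop]
  intro ε hε
  have hδ0 : 0 < ε/(2*(B+1)) := by positivity
  set δ := ε/(2*(B+1)) with hδ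
  obtain ⟨J, hJ⟩ := (Metric.tendsto_atTop.mp hd) δ hδ0
  have hG : Tendsto (fun n => ∑ j ∈ Finset.Icc 1 J, w n j * d j) atTop (𝓝 0) := by
    have h := tendsto_finset_sum (Finset.Icc 1 J)
      (fun j (_ : j ∈ Finset.Icc 1 J) => (hcol j).mul_const (d j))
    simpa using h
  obtain ⟨N, hN⟩ := (Metric.tendsto_atTop.mp hG) (ε/2) (by positivity)
  refine ⟨N, fun n hn => ?_⟩
  have hnn : ∀ j, 0 ≤ w n j * d j := fun j => mul_nonneg (hw n j) (hd0 j)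
  have hsplit : ∑ j ∈ Finset.Icc 1 (n-1), w n j * d j
      = ∑ j ∈ (Finset.Icc 1 (n-1)).filter (fun j => j ≤ J), w n j * d j
      + ∑ j ∈ (Finset.Icc 1 (n-1)).filter (fun j => ¬ j ≤ J), w n j * d j :=
    (Finset.sum_filter_add_sum_filter_not _ _ _).symm
  have h1 : ∑ j ∈ (Finset.Icc 1 (n-1)).filter (fun j => j ≤ J), w n j * d j
      ≤ ∑ j ∈ Finset.Icc 1 J, w n j * d j := by
    apply Finset.sum_le_sum_of_subset_of_nonneg
    · intro j hj
      simp only [Finset.mem_filter, Finset.mem_Icc] at hj ⊢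
      exact ⟨hj.1.1, hj.2⟩
    · exact fun j _ _ => hnn j
  have h1' : ∑ j ∈ Finset.Icc 1 J, w n j * d j < ε/2 := by
    have h := hN n hn
    rw [Real.dist_eq, sub_zero] at h
    exact lt_of_le_of_lt (le_abs_self _) h
  have h2 : ∑ j ∈ (Finset.Icc 1 (n-1)).filter (fun j => ¬ j ≤ J), w n j * d j
      ≤ δ * B := by
    have hdle : ∀ j, ¬ j ≤ J → d j ≤ δ := by
      intro j hj
      have h := hJ j (by omega)
      rw [Real.dist_eq, sub_zero] at h
      exact le_of_lt (lt_of_le_of_lt (le_abs_self _) h)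
    calc ∑ j ∈ (Finset.Icc 1 (n-1)).filter (fun j => ¬ j ≤ J), w n j * d j
        ≤ ∑ j ∈ (Finset.Icc 1 (n-1)).filter (fun j => ¬ j ≤ J), w n j * δ := by
          apply Finset.sum_le_sum
          intro j hj
          exact mul_le_mul_of_nonneg_left
            (hdle j (Finset.mem_filter.mp hj).2) (hw n j)
      _ = (∑ j ∈ (Finset.Icc 1 (n-1)).filter (fun j => ¬ j ≤ J), w n j) * δ := by
          rw [Finset.sum_mul]
      _ ≤ B * δ := by
          apply mul_le_mul_of_nonneg_right _ hδ0.le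
          refine le_trans (Finset.sum_le_sum_of_subset_of_nonneg
            (Finset.filter_subset _ _) (fun j _ _ => hw n j)) (hB n)
      _ = δ * B := mul_comm _ _
  have hδB : δ * B < ε/2 := by
    have hB1 : B + 1 ≠ 0 := by linarith
    have heq : δ * (B + 1) = ε/2 := by
      rw [hδ]; field_simp
    nlinarith [hδ0]
  rw [Real.dist_eq, sub_zero, abs_of_nonneg (Finset.sum_nonneg (fun j _ => hnn j))]
  calc ∑ j ∈ Finset.Icc 1 (n-1), w n j * d j
      = _ + _ := hsplit
    _ < ε/2 + ε/2 := by
        apply add_lt_add_of_le_of_lt (le_trans h1 h1'.le)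
        exact lt_of_le_of_lt h2 hδB
    _ = ε := by ring
  
end Stmt9Aux4

open Stmt9Aux Stmt9Aux2 Stmt9Aux3 Stmt9Aux4 Finset in
/-- as `n → ∞` over positive integers,
`n^{-2H} ∑_{j=1}^{n-1} (n-j) L(j) j^{-2(1-H)} → C₂Γ(2(1-H))/(2H(2H-1))`. -/
theorem stmt9 (H lam C2 : ℝ) (hH : H ∈ Set.Ioo (1 / 2 : ℝ) 1)
    (hlam : 0 < lam) (hC2 : 0 < C2) :
    Tendsto (fun n : ℕ =>
        (n : ℝ) ^ (-(2 * H)) *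
          ∑ j ∈ Finset.Icc 1 (n - 1),
            ((n : ℝ) - (j : ℝ)) * OUslow H lam C2 (j : ℝ) * (j : ℝ) ^ (-(2 * (1 - H))))
      atTop (nhds (C2 * Real.Gamma (2 * (1 - H)) / (2 * H * (2 * H - 1)))) := by
  obtain ⟨hH1, hH2⟩ := hH
  have hα0 : (0:ℝ) < 2*(1-H) := by linarith
  have hα1 : 2*(1-H) < 1 := by linarith
  have ha : Tendsto (fun j : ℕ => (lam * (j:ℝ)) ^ (2*(1-H)) * OUsum H lam (j:ℝ))
      atTop (𝓝 (Real.Gamma (2*(1-H)))) := by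
    have h := Stmt9Aux2.tendsto_a (α := 2*(1-H)) hα0 (le_of_lt hα1) hlam
    simpa only [OUsum] using h
  have hA : ∀ n : ℕ, (n:ℝ) ^ (-(2*H)) *
        ∑ j ∈ Finset.Icc 1 (n-1),
          ((n:ℝ) - (j:ℝ)) * OUslow H lam C2 (j:ℝ) * (j:ℝ) ^ (-(2*(1-H)))
      = ∑ j ∈ Finset.Icc 1 (n-1), wf (2*(1-H)) n j *
          (C2 * ((lam * (j:ℝ)) ^ (2*(1-H)) * OUsum H lam (j:ℝ))) := by
    intro n
    rw [Finset.mul_sum]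
    apply Finset.sum_congr rfl
    intro j hj
    simp only [Finset.mem_Icc] at hj
    have hjn : j ≤ n := le_trans hj.2 (Nat.sub_le n 1)
    have hjR : ((j:ℝ)) ≠ 0 := Nat.cast_ne_zero.mpr (by omega)
    rw [OUslow, if_neg hjR, wf]
    have hcast : ((n - j : ℕ):ℝ) = (n:ℝ) - (j:ℝ) := by push_cast [hjn]; ring
    rw [hcast, show -(2*H) = 2*(1-H) - 2 from by ring]
    ring
  have hW := Wn_tendsto (α := 2*(1-H)) hα0 hα1
  have hS1 : Tendsto (fun n : ℕ => ∑ j ∈ Finset.Icc 1 (n-1),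
        wf (2*(1-H)) n j * (C2 * Real.Gamma (2*(1-H)))) atTop
      (𝓝 ((1/(1-2*(1-H)) - 1/(2-2*(1-H))) * (C2 * Real.Gamma (2*(1-H))))) := by
    have h := hW.mul_const (C2 * Real.Gamma (2*(1-H)))
    apply h.congr
    intro n; rw [Finset.sum_mul]
  have hcol : ∀ j : ℕ, Tendsto (fun n : ℕ => wf (2*(1-H)) n j) atTop (𝓝 0) := by
    intro j
    apply squeeze_zero' (g := fun n : ℕ => (n:ℝ) ^ (2*(1-H) - 1) * (j:ℝ) ^ (-(2*(1-H))))
    · exact Eventually.of_forall (fun n => wf_nonneg _ n j)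
    · filter_upwards [eventually_ge_atTop 1] with n hn
      have hn0 : (0:ℝ) < (n:ℝ) := by exact_mod_cast (by omega : 0 < n)
      rw [wf]
      have h1 : ((n - j:ℕ):ℝ) ≤ (n:ℝ) := by exact_mod_cast Nat.sub_le n j
      have h2 : (n:ℝ) ^ (2*(1-H) - 2) * ((n-j:ℕ):ℝ)
          ≤ (n:ℝ) ^ (2*(1-H)-2) * (n:ℝ) :=
        mul_le_mul_of_nonneg_left h1 (Real.rpow_nonneg hn0.le _)
      have h3 : (n:ℝ) ^ (2*(1-H)-2) * (n:ℝ) = (n:ℝ) ^ (2*(1-H)-1) := by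
        have h4 := Real.rpow_add hn0 (2*(1-H)-2) 1
        rw [Real.rpow_one] at h4
        rw [show 2*(1-H)-2+1 = 2*(1-H)-1 from by ring] at h4
        exact h4.symm
      exact mul_le_mul_of_nonneg_right (le_trans h2 (le_of_eq h3))
        (Real.rpow_nonneg (Nat.cast_nonneg j) _)
    · have hbase : Tendsto (fun n : ℕ => (n:ℝ) ^ (2*(1-H)-1)) atTop (𝓝 0) := by
        have h := tendsto_rpow_neg_atTop (y := 1 - 2*(1-H)) (by linarith)
        have h5 := h.comp (tendsto_natCast_atTop_atTop (R := ℝ))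
        have h6 : (fun n : ℕ => ((n:ℝ)) ^ (-(1 - 2*(1-H)))) = fun n : ℕ => (n:ℝ) ^ (2*(1-H)-1) := by
          funext n; rw [show -(1 - 2*(1-H)) = 2*(1-H)-1 from by ring]
        rw [← h6]
        exact h5
      simpa using hbase.mul_const ((j:ℝ) ^ (-(2*(1-H))))
  have hd : Tendsto (fun j : ℕ => C2 *
      |(lam * (j:ℝ)) ^ (2*(1-H)) * OUsum H lam (j:ℝ) - Real.Gamma (2*(1-H))|)
      atTop (𝓝 0) := by
    have h1 := (ha.sub_const (Real.Gamma (2*(1-H)))).abs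
    rw [sub_self, abs_zero] at h1
    simpa using h1.const_mul C2
  have hBval : ∀ n : ℕ, ∑ j ∈ Finset.Icc 1 (n-1), wf (2*(1-H)) n j
      ≤ 1/(1-2*(1-H)) - 1/(2-2*(1-H)) := by
    intro n
    rcases le_or_gt 2 n with h | h
    · exact le_trans (Wn_le hα0 hα1 n h) (le_of_eq (Wval hα0 hα1))
    · have hempty : Finset.Icc 1 (n-1) = ∅ := by
        apply Finset.Icc_eq_empty; omega
      rw [hempty, Finset.sum_empty]
      have hp1 : (0:ℝ) < 1-2*(1-H) := by linarith
      have hp2 : (0:ℝ) < 2-2*(1-H) := by linarith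
      have := one_div_le_one_div_of_le hp1 (by linarith : 1-2*(1-H) ≤ 2-2*(1-H))
      linarith
  have hT := Stmt9Aux4.toeplitz (w := fun n j => wf (2*(1-H)) n j)
    (d := fun j => C2 * |(lam * (j:ℝ)) ^ (2*(1-H)) * OUsum H lam (j:ℝ) - Real.Gamma (2*(1-H))|)
    (B := 1/(1-2*(1-H)) - 1/(2-2*(1-H)))
    (fun n j => wf_nonneg _ n j)
    (fun j => mul_nonneg hC2.le (abs_nonneg _))
    hd hBval hcol
  have hdiff : Tendsto (fun n : ℕ =>
      (∑ j ∈ Finset.Icc 1 (n-1), wf (2*(1-H)) n j *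
        (C2 * ((lam * (j:ℝ)) ^ (2*(1-H)) * OUsum H lam (j:ℝ))))
      - ∑ j ∈ Finset.Icc 1 (n-1), wf (2*(1-H)) n j * (C2 * Real.Gamma (2*(1-H))))
      atTop (𝓝 0) := by
    apply squeeze_zero_norm _ hT
    intro n
    rw [Real.norm_eq_abs, ← Finset.sum_sub_distrib]
    calc |∑ j ∈ Finset.Icc 1 (n-1), (wf (2*(1-H)) n j *
            (C2 * ((lam * (j:ℝ)) ^ (2*(1-H)) * OUsum H lam (j:ℝ)))
          - wf (2*(1-H)) n j * (C2 * Real.Gamma (2*(1-H))))|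
        ≤ ∑ j ∈ Finset.Icc 1 (n-1), |wf (2*(1-H)) n j *
            (C2 * ((lam * (j:ℝ)) ^ (2*(1-H)) * OUsum H lam (j:ℝ)))
          - wf (2*(1-H)) n j * (C2 * Real.Gamma (2*(1-H)))| :=
          Finset.abs_sum_le_sum_abs _ _
      _ = ∑ j ∈ Finset.Icc 1 (n-1), wf (2*(1-H)) n j *
            (C2 * |(lam * (j:ℝ)) ^ (2*(1-H)) * OUsum H lam (j:ℝ) - Real.Gamma (2*(1-H))|) := by
          apply Finset.sum_congr rfl
          intro j _
          rw [← mul_sub, ← mul_sub, abs_mul, abs_mul,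
            abs_of_nonneg (wf_nonneg _ n j), abs_of_nonneg hC2.le]
  have hfinal := hdiff.add hS1
  rw [zero_add] at hfinal
  have hS : Tendsto (fun n : ℕ => ∑ j ∈ Finset.Icc 1 (n-1), wf (2*(1-H)) n j *
        (C2 * ((lam * (j:ℝ)) ^ (2*(1-H)) * OUsum H lam (j:ℝ)))) atTop
      (𝓝 ((1/(1-2*(1-H)) - 1/(2-2*(1-H))) * (C2 * Real.Gamma (2*(1-H))))) := by
    apply hfinal.congr
    intro n; ring
  have hconst : (1/(1-2*(1-H)) - 1/(2-2*(1-H))) * (C2 * Real.Gamma (2*(1-H)))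
      = C2 * Real.Gamma (2*(1-H)) / (2*H*(2*H-1)) := by
    rw [show (1:ℝ)-2*(1-H) = 2*H-1 from by ring, show (2:ℝ)-2*(1-H) = 2*H from by ring]
    have hne1 : 2*H - 1 ≠ 0 := by linarith
    have hne2 : 2*H ≠ 0 := by linarith
    field_simp
    ring
  rw [← hconst]
  exact hS.congr (fun n => (hA n).symm)
end
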